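/- arXiv:1010.2701 — 5 statements merged into one kernel-verified Lean document; each statement's English description precedes it below -/
import Mathlib

section
/- There do not exist affine maps μ: D(H) → Prob(Λ) from density operators on a finite-dimensional Hilbert space H (dim ≥ 2) to probability distributions on a finite set Λ, and ξ: E(H) → [0,1]^Λ from effects to functions on Λ with ξ(𝟙)(λ) = 1 for all λ, such that Tr(ρE) = Σ_λ μ(ρ)(λ)·ξ(E)(λ) for all density operators ρ and effects E. (No classical representation of quantum theory exists.) -/
open Matrix
open scoped ComplexOrder

namespace NCR

variable {d : ℕ}

/-- outer product `u ⊗ u†`. -/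
def outer (u : Fin d → ℂ) : Matrix (Fin d) (Fin d) ℂ := Matrix.vecMulVec u (star u)

lemma outer_isHermitian (u : Fin d → ℂ) : (outer u).IsHermitian := by
  ext i j
  simp [outer, Matrix.vecMulVec_apply, Matrix.conjTranspose_apply, mul_comm]

lemma outer_mulVec (u x : Fin d → ℂ) : outer u *ᵥ x = (star u ⬝ᵥ x) • u := by
  ext i
  simp only [outer, Matrix.mulVec, Matrix.vecMulVec_apply, dotProduct, Pi.smul_apply,
    smul_eq_mul, Finset.sum_mul, Pi.star_apply]
  exact Finset.sum_congr rfl fun j _ => by ring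

lemma qf_outer (u x : Fin d → ℂ) :
    star x ⬝ᵥ (outer u *ᵥ x) = ((Complex.normSq (star u ⬝ᵥ x) : ℝ) : ℂ) := by
  rw [outer_mulVec, dotProduct_smul, smul_eq_mul, star_dotProduct x u,
    Complex.normSq_eq_conj_mul_self]
  simp [RCLike.star_def, mul_comm]

lemma outer_posSemidef (u : Fin d → ℂ) : (outer u).PosSemidef := by
  refine .of_dotProduct_mulVec_nonneg (outer_isHermitian u) fun x => ?_
  rw [qf_outer]
  exact_mod_cast Complex.normSq_nonneg _

lemma dot_self_eq (x : Fin d → ℂ) :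
    star x ⬝ᵥ x = ((∑ i, Complex.normSq (x i) : ℝ) : ℂ) := by
  push_cast
  simp only [dotProduct, Pi.star_apply]
  exact Finset.sum_congr rfl fun i _ => by
    rw [Complex.normSq_eq_conj_mul_self]
    simp [RCLike.star_def, mul_comm]

lemma trace_outer (u : Fin d → ℂ) : (outer u).trace = star u ⬝ᵥ u := by
  simp [Matrix.trace, outer, Matrix.vecMulVec_apply, dotProduct, Matrix.diag, mul_comm]

lemma trace_outer_mul_outer (u v : Fin d → ℂ) :
    (outer u * outer v).trace = (star u ⬝ᵥ v) * (star v ⬝ᵥ u) := by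
  simp only [Matrix.trace, Matrix.diag, Matrix.mul_apply, outer, Matrix.vecMulVec_apply,
    dotProduct, Pi.star_apply, Finset.sum_mul_sum]
  rw [Finset.sum_comm]
  exact Finset.sum_congr rfl fun i _ => Finset.sum_congr rfl fun j _ => by ring


lemma posSemidef_smul_real {M : Matrix (Fin d) (Fin d) ℂ} (hM : M.PosSemidef)
    {c : ℝ} (hc : 0 ≤ c) : (((c : ℝ) : ℂ) • M).PosSemidef := by
  refine .of_dotProduct_mulVec_nonneg ?_ fun x => ?_
  · ext i j
    rw [Matrix.conjTranspose_apply, Matrix.smul_apply, Matrix.smul_apply, smul_eq_mul,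
      smul_eq_mul, star_mul', hM.1.apply, Complex.star_def, Complex.conj_ofReal]
  · rw [Matrix.smul_mulVec, dotProduct_smul, smul_eq_mul]
    exact mul_nonneg (Complex.zero_le_real.mpr hc) (hM.dotProduct_mulVec_nonneg x)

lemma pair_le_sum {i0 i1 : Fin d} (hne : i0 ≠ i1) (n : Fin d → ℝ) (hn : ∀ i, 0 ≤ n i) :
    n i0 + n i1 ≤ ∑ i, n i := by
  have h := Finset.sum_le_sum_of_subset_of_nonneg
    (Finset.subset_univ ({i0, i1} : Finset (Fin d))) (fun i _ _ => hn i)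
  rwa [Finset.sum_pair hne] at h

lemma ineqA (a b : ℂ) : Complex.normSq (a + b) ≤ 2 * Complex.normSq a + 2 * Complex.normSq b := by
  simp only [Complex.normSq_apply, Complex.add_re, Complex.add_im]
  nlinarith [sq_nonneg (a.re - b.re), sq_nonneg (a.im - b.im)]

lemma ineqB (a b : ℂ) : 4/7 * Complex.normSq a + 2/7 * Complex.normSq (a + b) ≤
    Complex.normSq a + Complex.normSq b := by
  simp only [Complex.normSq_apply, Complex.add_re, Complex.add_im]
  nlinarith [sq_nonneg (a.re - 2*b.re), sq_nonneg (a.im - 2*b.im), sq_nonneg b.re, sq_nonneg b.im]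

lemma psd_one_sub_smul {c : ℝ} (hc : 0 ≤ c) (w : Fin d → ℂ)
    (h : ∀ x : Fin d → ℂ, c * Complex.normSq (star w ⬝ᵥ x) ≤ ∑ i, Complex.normSq (x i)) :
    ((1 : Matrix (Fin d) (Fin d) ℂ) - ((c : ℝ) : ℂ) • outer w).PosSemidef := by
  refine .of_dotProduct_mulVec_nonneg ((Matrix.isHermitian_one).sub ((posSemidef_smul_real (outer_posSemidef w) hc).1)) fun x => ?_
  rw [Matrix.sub_mulVec, dotProduct_sub, Matrix.one_mulVec, Matrix.smul_mulVec,
    dotProduct_smul, smul_eq_mul, qf_outer, dot_self_eq]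
  rw [← Complex.ofReal_mul, ← Complex.ofReal_sub]
  rw [Complex.zero_le_real]
  linarith [h x]

lemma psd_combo (u w : Fin d → ℂ)
    (h : ∀ x : Fin d → ℂ, 4/7 * Complex.normSq (star u ⬝ᵥ x) + 2/7 * Complex.normSq (star w ⬝ᵥ x)
      ≤ ∑ i, Complex.normSq (x i)) :
    ((1 : Matrix (Fin d) (Fin d) ℂ) - (((4/7 : ℝ)) : ℂ) • outer u
      - (((2/7 : ℝ)) : ℂ) • outer w).PosSemidef := by
  refine .of_dotProduct_mulVec_nonneg (((Matrix.isHermitian_one).sub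
    ((posSemidef_smul_real (outer_posSemidef u) (by norm_num)).1)).sub
    ((posSemidef_smul_real (outer_posSemidef w) (by norm_num)).1)) fun x => ?_
  rw [Matrix.sub_mulVec, Matrix.sub_mulVec, dotProduct_sub, dotProduct_sub, Matrix.one_mulVec,
    Matrix.smul_mulVec, Matrix.smul_mulVec, dotProduct_smul, dotProduct_smul,
    smul_eq_mul, smul_eq_mul, qf_outer, qf_outer, dot_self_eq]
  rw [← Complex.ofReal_mul, ← Complex.ofReal_mul, ← Complex.ofReal_sub, ← Complex.ofReal_sub]
  rw [Complex.zero_le_real]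
  linarith [h x]

lemma force_zero {Λ : Type} [Fintype Λ] {m y : Λ → ℝ} (hm : ∀ l, 0 ≤ m l) (hy : ∀ l, 0 ≤ y l)
    (he : ∑ l, m l * y l = 0) {l₀ : Λ} (hl : 0 < m l₀) : y l₀ = 0 := by
  have h0 : m l₀ * y l₀ = 0 := by
    have := (Finset.sum_eq_zero_iff_of_nonneg
      (fun l _ => mul_nonneg (hm l) (hy l))).mp he l₀ (Finset.mem_univ _)
    exact this
  rcases mul_eq_zero.mp h0 with h | h
  · exact absurd h hl.ne'
  · exact h

lemma force_one {Λ : Type} [Fintype Λ] {m x : Λ → ℝ} (hm : ∀ l, 0 ≤ m l)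
    (hs : ∑ l, m l = 1) (hx : ∀ l, x l ≤ 1) (he : ∑ l, m l * x l = 1)
    {l₀ : Λ} (hl : 0 < m l₀) : x l₀ = 1 := by
  have h := force_zero (y := fun l => 1 - x l) hm (fun l => sub_nonneg.mpr (hx l)) ?_ hl
  · have h' : 1 - x l₀ = 0 := h
    linarith
  · have : ∑ l, m l * (1 - x l) = (∑ l, m l) - ∑ l, m l * x l := by
      rw [← Finset.sum_sub_distrib]
      exact Finset.sum_congr rfl fun l _ => by ring
    rw [this, hs, he, sub_self]

/-- standard basis vector -/
def bv (k : Fin d) : Fin d → ℂ := fun i => if i = k then 1 else 0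

lemma star_bv (k : Fin d) : star (bv k) = bv k := by
  funext j
  simp [bv, Pi.star_apply, apply_ite]

lemma bv_dot (k : Fin d) (x : Fin d → ℂ) : bv k ⬝ᵥ x = x k := by
  simp [bv, dotProduct, ite_mul]

lemma bv_apply_self (k : Fin d) : bv k k = 1 := by simp [bv]

lemma bv_apply_ne {k j : Fin d} (h : j ≠ k) : bv k j = 0 := by simp [bv, h]

lemma outer_decomp (a b : Fin d → ℂ) :
    ((2⁻¹ : ℂ)) • outer (a + b) + ((2⁻¹ : ℂ)) • outer (a - b) = outer a + outer b := by
  ext i j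
  simp only [outer, Matrix.add_apply, Matrix.smul_apply, Matrix.vecMulVec_apply, Pi.add_apply,
    Pi.sub_apply, Pi.star_apply, star_add, star_sub, smul_eq_mul]
  ring

lemma ineqBm (a b : ℂ) : 4/7 * Complex.normSq a + 2/7 * Complex.normSq (a - b) ≤
    Complex.normSq a + Complex.normSq b := by
  have h := ineqB a (-b)
  simpa [sub_eq_add_neg, Complex.normSq_neg] using h

end NCR

open NCR

/-- A density operator: positive semidefinite with unit trace. -/
def IsDensity {d : ℕ} (ρ : Matrix (Fin d) (Fin d) ℂ) : Prop :=
  ρ.PosSemidef ∧ ρ.trace = 1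

/-- An effect: `0 ≤ E ≤ 𝟙`. -/
def IsEffect {d : ℕ} (E : Matrix (Fin d) (Fin d) ℂ) : Prop :=
  E.PosSemidef ∧ (1 - E).PosSemidef

/-- There is no classical (non-negative probability) representation of quantum theory:
no pair of affine maps taking density operators to probability distributions on a finite
set `Λ` and effects to `[0,1]`-valued functions on `Λ` (with the unit effect mapping to
the constant function 1) can reproduce the Born rule. -/
theorem no_classical_representation (d : ℕ) (hd : 2 ≤ d) (Λ : Type) [Fintype Λ] :
    ¬ ∃ (μ ξ : Matrix (Fin d) (Fin d) ℂ → Λ → ℝ),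
      (∀ ρ, IsDensity ρ → (∀ l, 0 ≤ μ ρ l) ∧ ∑ l, μ ρ l = 1) ∧
      (∀ E, IsEffect E → ∀ l, ξ E l ∈ Set.Icc (0 : ℝ) 1) ∧
      (∀ l, ξ 1 l = 1) ∧
      (∀ ρ₁ ρ₂, IsDensity ρ₁ → IsDensity ρ₂ → ∀ t : ℝ, 0 ≤ t → t ≤ 1 →
        μ ((t : ℂ) • ρ₁ + ((1 - t : ℝ) : ℂ) • ρ₂) = t • μ ρ₁ + (1 - t) • μ ρ₂) ∧
      (∀ E₁ E₂, IsEffect E₁ → IsEffect E₂ → ∀ t : ℝ, 0 ≤ t → t ≤ 1 →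
        ξ ((t : ℂ) • E₁ + ((1 - t : ℝ) : ℂ) • E₂) = t • ξ E₁ + (1 - t) • ξ E₂) ∧
      (∀ ρ E, IsDensity ρ → IsEffect E →
        (ρ * E).trace = ((∑ l, μ ρ l * ξ E l : ℝ) : ℂ)) := by
  rintro ⟨μ, ξ, hμ, hξ, hξone, hμaff, hξaff, hBorn⟩
  have h12 : (1 - 1/2 : ℝ) = (1/2 : ℝ) := by norm_num
  have h78 : (1 - 1/8 : ℝ) = (7/8 : ℝ) := by norm_num
  have h0eff : IsEffect (0 : Matrix (Fin d) (Fin d) ℂ) :=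
    ⟨Matrix.PosSemidef.zero, by rw [sub_zero]; exact Matrix.PosSemidef.one⟩
  have h1eff : IsEffect (1 : Matrix (Fin d) (Fin d) ℂ) :=
    ⟨Matrix.PosSemidef.one, by rw [sub_self]; exact Matrix.PosSemidef.zero⟩
  -- The key contradiction, given two "pure states" with a common support point.
  have key : ∀ P Q : Matrix (Fin d) (Fin d) ℂ,
      IsDensity P → IsEffect P → (P * P).trace = 1 →
      IsDensity Q → IsEffect Q → (Q * Q).trace = 1 →
      ((1 : Matrix (Fin d) (Fin d) ℂ) -
        ((8/7 : ℝ) : ℂ) • (((1/2 : ℝ) : ℂ) • P + ((1/2 : ℝ) : ℂ) • Q)).PosSemidef →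
      ∀ l : Λ, 0 < μ P l → 0 < μ Q l → False := by
    intro P Q hPd hPe hPP hQd hQe hQQ hM78 l hlP hlQ
    set F : Matrix (Fin d) (Fin d) ℂ := ((1/2 : ℝ) : ℂ) • P + ((1/2 : ℝ) : ℂ) • Q with hF
    set E' : Matrix (Fin d) (Fin d) ℂ := 1 - ((8/7 : ℝ) : ℂ) • F with hE'
    have hFpsd : F.PosSemidef :=
      (posSemidef_smul_real hPd.1 (by norm_num)).add (posSemidef_smul_real hQd.1 (by norm_num))
    have hE'psd : E'.PosSemidef := hM78
    have h1F : ((1 : Matrix (Fin d) (Fin d) ℂ) - F).PosSemidef := by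
      have hdec : (1 : Matrix (Fin d) (Fin d) ℂ) - F = E' + ((1/7 : ℝ) : ℂ) • F := by
        rw [hE']; push_cast; module
      rw [hdec]
      exact hE'psd.add (posSemidef_smul_real hFpsd (by norm_num))
    have hFe : IsEffect F := ⟨hFpsd, h1F⟩
    have hHe : IsEffect (1 - F) := ⟨h1F, by rw [sub_sub_cancel]; exact hFpsd⟩
    have hE'e : IsEffect E' := by
      refine ⟨hE'psd, ?_⟩
      have : (1 : Matrix (Fin d) (Fin d) ℂ) - E' = ((8/7 : ℝ) : ℂ) • F := by
        rw [hE', sub_sub_cancel]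
      rw [this]
      exact posSemidef_smul_real hFpsd (by norm_num)
    obtain ⟨hμPn, hμPs⟩ := hμ P hPd
    obtain ⟨hμQn, hμQs⟩ := hμ Q hQd
    -- Born rule forces deterministic values on the common support point
    have bornPP : (∑ l, μ P l * ξ P l) = 1 := by
      have h := hBorn P P hPd hPe
      rw [hPP] at h
      exact_mod_cast h.symm
    have hξP1 : ξ P l = 1 :=
      force_one hμPn hμPs (fun l => (hξ P hPe l).2) bornPP hlP
    have bornQQ : (∑ l, μ Q l * ξ Q l) = 1 := by
      have h := hBorn Q Q hQd hQe
      rw [hQQ] at h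
      exact_mod_cast h.symm
    have hξQ1 : ξ Q l = 1 :=
      force_one hμQn hμQs (fun l => (hξ Q hQe l).2) bornQQ hlQ
    have born0 : (∑ l, μ P l * ξ 0 l) = 0 := by
      have h := hBorn P 0 hPd h0eff
      rw [mul_zero, Matrix.trace_zero] at h
      exact_mod_cast h.symm
    have hξ0 : ξ (0 : Matrix (Fin d) (Fin d) ℂ) l = 0 :=
      force_zero hμPn (fun l => (hξ 0 h0eff l).1) born0 hlP
    -- affinity: value of ξ F at l
    have hA := hξaff P Q hPe hQe (1/2) (by norm_num) (by norm_num)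
    rw [h12, ← hF] at hA
    have hξF1 : ξ F l = 1 := by
      rw [hA]
      simp only [Pi.add_apply, Pi.smul_apply, smul_eq_mul, hξP1, hξQ1]
      norm_num
    -- affinity: ξ F + ξ (1 - F) = ξ 1 + ξ 0 pointwise
    have hB1 := hξaff F (1 - F) hFe hHe (1/2) (by norm_num) (by norm_num)
    rw [h12] at hB1
    have hB2 := hξaff 1 0 h1eff h0eff (1/2) (by norm_num) (by norm_num)
    rw [h12] at hB2
    have hmatB : ((1/2 : ℝ) : ℂ) • F + ((1/2 : ℝ) : ℂ) • ((1 : Matrix (Fin d) (Fin d) ℂ) - F)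
        = ((1/2 : ℝ) : ℂ) • (1 : Matrix (Fin d) (Fin d) ℂ)
          + ((1/2 : ℝ) : ℂ) • (0 : Matrix (Fin d) (Fin d) ℂ) := by
      push_cast; module
    rw [hmatB, hB2] at hB1
    have hHl : ξ ((1 : Matrix (Fin d) (Fin d) ℂ) - F) l = 0 := by
      have h := congrFun hB1 l
      simp only [Pi.add_apply, Pi.smul_apply, smul_eq_mul, hξone l, hξ0, hξF1] at h
      linarith
    -- affinity: ξ (1 - F) ≥ 1/8 at l
    have hC := hξaff 1 E' h1eff hE'e (1/8) (by norm_num) (by norm_num)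
    rw [h78] at hC
    have hmatC : ((1/8 : ℝ) : ℂ) • (1 : Matrix (Fin d) (Fin d) ℂ) + ((7/8 : ℝ) : ℂ) • E'
        = (1 : Matrix (Fin d) (Fin d) ℂ) - F := by
      rw [hE']; push_cast; module
    rw [hmatC] at hC
    have h := congrFun hC l
    rw [hHl] at h
    simp only [Pi.add_apply, Pi.smul_apply, smul_eq_mul, hξone l] at h
    have hE'nonneg : 0 ≤ ξ E' l := (hξ E' hE'e l).1
    linarith
  -- now build the four pure states
  set i0 : Fin d := ⟨0, by omega⟩ with hi0
  set i1 : Fin d := ⟨1, by omega⟩ with hi1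
  have hne : i0 ≠ i1 := by simp [hi0, hi1, Fin.ext_iff]
  set e0 : Fin d → ℂ := bv i0 with he0
  set e1 : Fin d → ℂ := bv i1 with he1
  set wp : Fin d → ℂ := e0 + e1 with hwp
  set wm : Fin d → ℂ := e0 - e1 with hwm
  have de0 : ∀ x : Fin d → ℂ, star e0 ⬝ᵥ x = x i0 := fun x => by
    rw [he0, star_bv, bv_dot]
  have de1 : ∀ x : Fin d → ℂ, star e1 ⬝ᵥ x = x i1 := fun x => by
    rw [he1, star_bv, bv_dot]
  have dwp : ∀ x : Fin d → ℂ, star wp ⬝ᵥ x = x i0 + x i1 := fun x => by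
    rw [hwp, star_add, add_dotProduct, he0, he1, star_bv, star_bv, bv_dot, bv_dot]
  have dwm : ∀ x : Fin d → ℂ, star wm ⬝ᵥ x = x i0 - x i1 := fun x => by
    rw [hwm, star_sub, sub_dotProduct, he0, he1, star_bv, star_bv, bv_dot, bv_dot]
  have ve0 : e0 i0 = 1 ∧ e0 i1 = 0 := by
    constructor
    · rw [he0]; exact bv_apply_self i0
    · rw [he0]; exact bv_apply_ne hne.symm
  have ve1 : e1 i0 = 0 ∧ e1 i1 = 1 := by
    constructor
    · rw [he1]; exact bv_apply_ne hne
    · rw [he1]; exact bv_apply_self i1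
  set P0 : Matrix (Fin d) (Fin d) ℂ := outer e0 with hP0
  set P1 : Matrix (Fin d) (Fin d) ℂ := outer e1 with hP1
  set Pp : Matrix (Fin d) (Fin d) ℂ := ((1/2 : ℝ) : ℂ) • outer wp with hPp
  set Pm : Matrix (Fin d) (Fin d) ℂ := ((1/2 : ℝ) : ℂ) • outer wm with hPm
  -- densities
  have hP0d : IsDensity P0 := by
    refine ⟨outer_posSemidef e0, ?_⟩
    rw [hP0, trace_outer, de0, ve0.1]
  have hP1d : IsDensity P1 := by
    refine ⟨outer_posSemidef e1, ?_⟩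
    rw [hP1, trace_outer, de1, ve1.2]
  have hPpd : IsDensity Pp := by
    refine ⟨posSemidef_smul_real (outer_posSemidef wp) (by norm_num), ?_⟩
    rw [hPp, Matrix.trace_smul, trace_outer, dwp, hwp]
    simp only [Pi.add_apply, ve0.1, ve0.2, ve1.1, ve1.2, smul_eq_mul]
    push_cast
    norm_num
  have hPmd : IsDensity Pm := by
    refine ⟨posSemidef_smul_real (outer_posSemidef wm) (by norm_num), ?_⟩
    rw [hPm, Matrix.trace_smul, trace_outer, dwm, hwm]
    simp only [Pi.sub_apply, ve0.1, ve0.2, ve1.1, ve1.2, smul_eq_mul]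
    push_cast
    norm_num
  -- effects
  have nsq_nonneg : ∀ (x : Fin d → ℂ) (i : Fin d), 0 ≤ Complex.normSq (x i) :=
    fun x i => Complex.normSq_nonneg _
  have hpair : ∀ x : Fin d → ℂ,
      Complex.normSq (x i0) + Complex.normSq (x i1) ≤ ∑ i, Complex.normSq (x i) :=
    fun x => pair_le_sum hne _ (nsq_nonneg x)
  have hP0e : IsEffect P0 := by
    refine ⟨hP0d.1, ?_⟩
    have h := psd_one_sub_smul (c := 1) (by norm_num) e0 ?_
    · rw [Complex.ofReal_one, one_smul] at h
      exact h
    · intro x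
      rw [de0, one_mul]
      exact le_trans (by nlinarith [Complex.normSq_nonneg (x i1)]) (hpair x)
  have hP1e : IsEffect P1 := by
    refine ⟨hP1d.1, ?_⟩
    have h := psd_one_sub_smul (c := 1) (by norm_num) e1 ?_
    · rw [Complex.ofReal_one, one_smul] at h
      exact h
    · intro x
      rw [de1, one_mul]
      exact le_trans (by nlinarith [Complex.normSq_nonneg (x i0)]) (hpair x)
  have hPpe : IsEffect Pp := by
    refine ⟨hPpd.1, ?_⟩
    refine psd_one_sub_smul (by norm_num : (0:ℝ) ≤ 1/2) wp ?_
    intro x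
    rw [dwp]
    have h := ineqA (x i0) (x i1)
    have := hpair x
    linarith
  have hPme : IsEffect Pm := by
    refine ⟨hPmd.1, ?_⟩
    refine psd_one_sub_smul (by norm_num : (0:ℝ) ≤ 1/2) wm ?_
    intro x
    rw [dwm, sub_eq_add_neg]
    have h := ineqA (x i0) (-(x i1))
    rw [Complex.normSq_neg] at h
    have := hpair x
    linarith
  -- purity
  have hP0P0 : (P0 * P0).trace = 1 := by
    rw [hP0, trace_outer_mul_outer, de0, ve0.1, one_mul]
  have hP1P1 : (P1 * P1).trace = 1 := by
    rw [hP1, trace_outer_mul_outer, de1, ve1.2, one_mul]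
  have hPpPp : (Pp * Pp).trace = 1 := by
    rw [hPp, smul_mul_assoc, mul_smul_comm, Matrix.trace_smul, Matrix.trace_smul,
      trace_outer_mul_outer, dwp, hwp]
    simp only [Pi.add_apply, ve0.1, ve0.2, ve1.1, ve1.2, smul_eq_mul]
    push_cast
    norm_num
  have hPmPm : (Pm * Pm).trace = 1 := by
    rw [hPm, smul_mul_assoc, mul_smul_comm, Matrix.trace_smul, Matrix.trace_smul,
      trace_outer_mul_outer, dwm, hwm]
    simp only [Pi.sub_apply, ve0.1, ve0.2, ve1.1, ve1.2, smul_eq_mul]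
    push_cast
    norm_num
  -- the PSD bounds for the four pairs
  have keyPSD : ∀ u w : Fin d → ℂ,
      (∀ x : Fin d → ℂ, 4/7 * Complex.normSq (star u ⬝ᵥ x) + 2/7 * Complex.normSq (star w ⬝ᵥ x)
        ≤ ∑ i, Complex.normSq (x i)) →
      ((1 : Matrix (Fin d) (Fin d) ℂ) - ((8/7 : ℝ) : ℂ) •
        (((1/2 : ℝ) : ℂ) • outer u + ((1/2 : ℝ) : ℂ) • (((1/2 : ℝ) : ℂ) • outer w))).PosSemidef := by
    intro u w hb
    have heq : (1 : Matrix (Fin d) (Fin d) ℂ) - ((8/7 : ℝ) : ℂ) •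
        (((1/2 : ℝ) : ℂ) • outer u + ((1/2 : ℝ) : ℂ) • (((1/2 : ℝ) : ℂ) • outer w))
        = (1 : Matrix (Fin d) (Fin d) ℂ) - ((4/7 : ℝ) : ℂ) • outer u
          - ((2/7 : ℝ) : ℂ) • outer w := by
      push_cast; module
    rw [heq]
    exact psd_combo u w hb
  have psd00 := keyPSD e0 wp (fun x => by
    rw [de0, dwp]
    exact le_trans (ineqB (x i0) (x i1)) (hpair x))
  have psd01 := keyPSD e0 wm (fun x => by
    rw [de0, dwm]
    exact le_trans (ineqBm (x i0) (x i1)) (hpair x))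
  have psd10 := keyPSD e1 wp (fun x => by
    rw [de1, dwp, add_comm (x i0)]
    exact le_trans (ineqB (x i1) (x i0)) (by linarith [hpair x]))
  have psd11 := keyPSD e1 wm (fun x => by
    rw [de1, dwm, show x i0 - x i1 = -(x i1 - x i0) by ring, Complex.normSq_neg]
    exact le_trans (ineqBm (x i1) (x i0)) (by linarith [hpair x]))
  -- μ affinity on the two decompositions of the maximally mixed state of the qubit
  have hmix1 := hμaff P0 P1 hP0d hP1d (1/2) (by norm_num) (by norm_num)
  rw [h12] at hmix1
  have hmix2 := hμaff Pp Pm hPpd hPmd (1/2) (by norm_num) (by norm_num)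
  rw [h12] at hmix2
  have hmat3 : ((1/2 : ℝ) : ℂ) • P0 + ((1/2 : ℝ) : ℂ) • P1
      = ((1/2 : ℝ) : ℂ) • Pp + ((1/2 : ℝ) : ℂ) • Pm := by
    rw [hP0, hP1, hPp, hPm, hwp, hwm]
    ext i j
    simp only [outer, Matrix.add_apply, Matrix.smul_apply, Matrix.vecMulVec_apply,
      Pi.add_apply, Pi.sub_apply, Pi.star_apply, star_add, star_sub, smul_eq_mul]
    push_cast
    ring
  have hdecomp : (1/2 : ℝ) • μ P0 + (1/2 : ℝ) • μ P1
      = (1/2 : ℝ) • μ Pp + (1/2 : ℝ) • μ Pm := by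
    rw [← hmix1, hmat3, hmix2]
  have hμP0 := (hμ P0 hP0d).1
  have hμP1 := (hμ P1 hP1d).1
  have hμPp := (hμ Pp hPpd).1
  have hμPm := (hμ Pm hPmd).1
  have hsum1 : ∑ l, ((1/2 : ℝ) • μ P0 + (1/2 : ℝ) • μ P1) l = 1 := by
    simp only [Pi.add_apply, Pi.smul_apply, smul_eq_mul]
    rw [Finset.sum_add_distrib, ← Finset.mul_sum, ← Finset.mul_sum,
      (hμ P0 hP0d).2, (hμ P1 hP1d).2]
    norm_num
  have hex : ∃ l, 0 < ((1/2 : ℝ) • μ P0 + (1/2 : ℝ) • μ P1) l := by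
    by_contra hcon
    push_neg at hcon
    have := Finset.sum_nonpos (fun l (_ : l ∈ Finset.univ) => hcon l)
    rw [hsum1] at this
    linarith
  obtain ⟨l0, hl0⟩ := hex
  have hl0' : 0 < ((1/2 : ℝ) • μ Pp + (1/2 : ℝ) • μ Pm) l0 := by
    rw [← hdecomp]; exact hl0
  simp only [Pi.add_apply, Pi.smul_apply, smul_eq_mul] at hl0 hl0'
  have hcase1 : 0 < μ P0 l0 ∨ 0 < μ P1 l0 := by
    by_contra hcc
    push_neg at hcc
    have := hμP0 l0
    have := hμP1 l0
    linarith [hcc.1, hcc.2]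
  have hcase2 : 0 < μ Pp l0 ∨ 0 < μ Pm l0 := by
    by_contra hcc
    push_neg at hcc
    have := hμPp l0
    have := hμPm l0
    linarith [hcc.1, hcc.2]
  rcases hcase1 with hc1 | hc1 <;> rcases hcase2 with hc2 | hc2
  · exact key P0 Pp hP0d hP0e hP0P0 hPpd hPpe hPpPp psd00 l0 hc1 hc2
  · exact key P0 Pm hP0d hP0e hP0P0 hPmd hPme hPmPm psd01 l0 hc1 hc2
  · exact key P1 Pp hP1d hP1e hP1P1 hPpd hPpe hPpPp psd10 l0 hc1 hc2
  · exact key P1 Pm hP1d hP1e hP1P1 hPmd hPme hPmPm psd11 l0 hc1 hc2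
end

section
/- If {F(λ)}_{λ∈Λ} is a finite frame for the real Hilbert space of Hermitian operators on C^d and {D(λ)}_{λ∈Λ} is a dual frame to it, then it is impossible that all F(λ) are positive semi-definite and all D(λ) are positive semi-definite simultaneously (for d ≥ 2). -/
open Matrix
open scoped ComplexOrder
open scoped MatrixOrder


lemma trace_psd_nonneg {d : ℕ} {M : Matrix (Fin d) (Fin d) ℂ} (hM : M.PosSemidef) : 0 ≤ M.trace := by
  rw [Matrix.trace]
  apply Finset.sum_nonneg
  intro i _
  have := hM.dotProduct_mulVec_nonneg (Pi.single i 1)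
  simpa [Matrix.mulVec_single, dotProduct, Pi.single_apply] using this

lemma trace_mul_psd_nonneg {d : ℕ} {A B : Matrix (Fin d) (Fin d) ℂ} (hA : A.PosSemidef)
    (hB : B.PosSemidef) : 0 ≤ (A * B).trace := by
  obtain ⟨C, rfl⟩ : ∃ C : Matrix (Fin d) (Fin d) ℂ, B = Cᴴ * C :=
    ⟨CFC.sqrt B, by rw [(CFC.sqrt_nonneg B).posSemidef.1.eq, CFC.sqrt_mul_sqrt_self B hB.nonneg]⟩
  rw [← Matrix.mul_assoc, trace_mul_cycle]
  exact trace_psd_nonneg (hA.mul_mul_conjTranspose_same C)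

lemma eq_zero_of_trace_ctc {d : ℕ} {C : Matrix (Fin d) (Fin d) ℂ}
    (h : (Cᴴ * C).trace = 0) : C = 0 := by
  rw [Matrix.trace] at h
  have hd : ∀ j, (Cᴴ * C).diag j = 0 := by
    have := Finset.sum_eq_zero_iff_of_nonneg (f := (Cᴴ * C).diag) (s := Finset.univ) ?_ |>.mp h
    · intro j; exact this j (Finset.mem_univ j)
    · intro j _
      simp only [Matrix.diag, Matrix.mul_apply, Matrix.conjTranspose_apply]
      exact Fintype.sum_nonneg fun i => star_mul_self_nonneg _
  ext i j
  have := hd j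
  simp only [Matrix.diag, Matrix.mul_apply, Matrix.conjTranspose_apply] at this
  have h2 : dotProduct (star (fun i => C i j)) (fun i => C i j) = 0 := by
    simpa [dotProduct] using this
  have := dotProduct_star_self_eq_zero.mp h2
  simpa using congrFun this i

lemma mul_eq_zero_of_trace_mul_zero {d : ℕ} {A B : Matrix (Fin d) (Fin d) ℂ}
    (hA : A.PosSemidef) (hB : B.PosSemidef) (h : (A * B).trace = 0) : A * B = 0 := by
  set S := CFC.sqrt A with hS
  set T := CFC.sqrt B with hT
  have hSS : S * S = A := CFC.sqrt_mul_sqrt_self A hA.nonneg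
  have hTT : T * T = B := CFC.sqrt_mul_sqrt_self B hB.nonneg
  have hSH : Sᴴ = S := (CFC.sqrt_nonneg A).posSemidef.1
  have hTH : Tᴴ = T := (CFC.sqrt_nonneg B).posSemidef.1
  have key : (S * T)ᴴ * (S * T) = T * (A * T) := by
    rw [conjTranspose_mul, hSH, hTH, Matrix.mul_assoc, ← Matrix.mul_assoc S S T, hSS]
  have htr : ((S * T)ᴴ * (S * T)).trace = 0 := by
    rw [key, ← Matrix.mul_assoc, trace_mul_cycle, hTT]
    rw [trace_mul_comm, h]
  have hST : S * T = 0 := eq_zero_of_trace_ctc htr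
  calc A * B = S * ((S * T) * T) := by rw [← hSS, ← hTT]; noncomm_ring
    _ = 0 := by rw [hST, Matrix.zero_mul, Matrix.mul_zero]


section RankOne
variable {d : ℕ} (ψ : Fin d → ℂ)

noncomputable def proj : Matrix (Fin d) (Fin d) ℂ := vecMulVec ψ (star ψ)

lemma proj_herm : (proj ψ).IsHermitian := by
  ext i j
  simp [proj, vecMulVec_apply, Matrix.conjTranspose_apply, mul_comm]

lemma proj_psd : (proj ψ).PosSemidef := by
  refine .of_dotProduct_mulVec_nonneg (proj_herm ψ) (fun x => ?_)
  have key : dotProduct (star x) ((proj ψ) *ᵥ x) = star (dotProduct (star ψ) x) * (dotProduct (star ψ) x) := by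
    simp only [dotProduct, mulVec, proj, vecMulVec_apply, Pi.star_apply, star_sum, star_mul',
      star_star, Finset.mul_sum, Finset.sum_mul]
    rw [Finset.sum_comm]
    congr 1; ext i; congr 1; ext j; ring
  rw [key]
  exact star_mul_self_nonneg _

lemma proj_trace (hψ : dotProduct (star ψ) ψ = 1) : (proj ψ).trace = 1 := by
  simp only [Matrix.trace, Matrix.diag, proj, vecMulVec_apply]
  rw [← hψ]; simp [dotProduct, mul_comm]

lemma trace_mul_proj (M : Matrix (Fin d) (Fin d) ℂ) :
    (M * proj ψ).trace = dotProduct (star ψ) (M *ᵥ ψ) := by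
  simp only [Matrix.trace, Matrix.diag, Matrix.mul_apply, proj, vecMulVec_apply, dotProduct,
    mulVec, Pi.star_apply, Finset.mul_sum]
  congr 1; ext i; congr 1; ext j; ring

lemma proj_mul_proj (hψ : dotProduct (star ψ) ψ = 1) : proj ψ * proj ψ = proj ψ := by
  ext i j
  simp only [Matrix.mul_apply, proj, vecMulVec_apply]
  have : ∑ k, ψ i * star ψ k * (ψ k * star ψ j) = (ψ i * star ψ j) * dotProduct (star ψ) ψ := by
    simp only [dotProduct, Finset.mul_sum]; congr 1; ext k; ring
  rw [this, hψ, mul_one]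

lemma proj_mul_mul_proj (M : Matrix (Fin d) (Fin d) ℂ) :
    proj ψ * M * proj ψ = (M * proj ψ).trace • proj ψ := by
  rw [trace_mul_proj]
  ext i j
  simp only [Matrix.mul_apply, proj, vecMulVec_apply, Matrix.smul_apply, smul_eq_mul, dotProduct,
    mulVec, Pi.star_apply, Finset.mul_sum, Finset.sum_mul]
  rw [Finset.sum_comm]
  congr 1; ext k; congr 1; ext l; ring

lemma one_sub_proj_psd (hψ : dotProduct (star ψ) ψ = 1) : (1 - proj ψ).PosSemidef := by
  have hH : (1 - proj ψ)ᴴ = 1 - proj ψ := by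
    rw [conjTranspose_sub, conjTranspose_one, (proj_herm ψ).eq]
  have : (1 - proj ψ)ᴴ * (1 - proj ψ) = 1 - proj ψ := by
    rw [hH, Matrix.sub_mul, Matrix.mul_sub, Matrix.mul_sub, Matrix.one_mul, Matrix.mul_one,
      proj_mul_proj ψ hψ]
    simp only [Matrix.mul_one, Matrix.one_mul]
    abel
  rw [← this]
  exact posSemidef_conjTranspose_mul_self _
end RankOne

lemma absorb {d : ℕ} (ψ : Fin d → ℂ) (hψ : dotProduct (star ψ) ψ = 1)
    {M : Matrix (Fin d) (Fin d) ℂ} (hM : M.PosSemidef) (htrM : M.trace = 1)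
    (hg : (M * proj ψ).trace = 1) : M = proj ψ := by
  have h0 : (M * (1 - proj ψ)).trace = 0 := by
    rw [Matrix.mul_sub, Matrix.mul_one, trace_sub, htrM, hg, sub_self]
  have hz : M * (1 - proj ψ) = 0 := mul_eq_zero_of_trace_mul_zero hM (one_sub_proj_psd ψ hψ) h0
  have hMP : M = M * proj ψ := by
    have := hz
    rw [Matrix.mul_sub, Matrix.mul_one, sub_eq_zero] at this
    exact this
  have hPM : M = proj ψ * M := by
    calc M = Mᴴ := hM.1.symm
    _ = (M * proj ψ)ᴴ := by rw [← hMP]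
    _ = (proj ψ)ᴴ * Mᴴ := conjTranspose_mul _ _
    _ = proj ψ * M := by rw [(proj_herm ψ).eq, hM.1.eq]
  calc M = proj ψ * M * proj ψ := by conv_lhs => rw [hMP, hPM]
  _ = (M * proj ψ).trace • proj ψ := proj_mul_mul_proj ψ M
  _ = proj ψ := by rw [hg, one_smul]

-- the unit vectors
noncomputable def uvec (d N : ℕ) (hd : 2 ≤ d) (k : Fin N) : Fin d → ℂ :=
  fun i => if i = ⟨0, by omega⟩ then ((Real.sqrt (1 + (k:ℝ)^2))⁻¹ : ℂ)
    else if i = ⟨1, by omega⟩ then (((Real.sqrt (1 + (k:ℝ)^2))⁻¹ * (k:ℝ) : ℝ) : ℂ) else 0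

lemma uvec_norm (d N : ℕ) (hd : 2 ≤ d) (k : Fin N) :
    dotProduct (star (uvec d N hd k)) (uvec d N hd k) = 1 := by
  set s : ℝ := 1 + (k:ℝ)^2 with hsdef
  have hpos : (0:ℝ) < s := by positivity
  have hs : Real.sqrt s ^ 2 = s := Real.sq_sqrt hpos.le
  have hne : Real.sqrt s ≠ 0 := by positivity
  set a0 : Fin d := ⟨0, by omega⟩
  set a1 : Fin d := ⟨1, by omega⟩
  have h01 : a0 ≠ a1 := by simp [a0, a1, Fin.ext_iff]
  have e0 : uvec d N hd k a0 = ((Real.sqrt s)⁻¹ : ℝ) := by simp [uvec, a0, hsdef]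
  have e1 : uvec d N hd k a1 = (((Real.sqrt s)⁻¹ * (k:ℝ) : ℝ) : ℂ) := by
    simp [uvec, a1, if_neg h01.symm, Fin.ext_iff, hsdef]
  rw [dotProduct]
  rw [show (Finset.univ : Finset (Fin d)) = insert a0 {a1} ∪ ((Finset.univ : Finset (Fin d)) \ insert a0 {a1}) by
    rw [Finset.union_sdiff_of_subset (Finset.subset_univ _)]]
  rw [Finset.sum_union (Finset.disjoint_sdiff)]
  have hz : ∑ i ∈ ((Finset.univ : Finset (Fin d)) \ insert a0 {a1}),
      star (uvec d N hd k) i * uvec d N hd k i = 0 := by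
    apply Finset.sum_eq_zero
    intro x hx
    simp only [Finset.mem_sdiff, Finset.mem_insert, Finset.mem_singleton] at hx
    push_neg at hx
    simp [uvec, show x ≠ ⟨0, by omega⟩ from hx.2.1, show x ≠ ⟨1, by omega⟩ from hx.2.2]
  rw [hz, add_zero, Finset.sum_insert (by simp [h01]), Finset.sum_singleton]
  simp only [Pi.star_apply, e0, e1, Complex.star_def, Complex.conj_ofReal]
  rw [← Complex.ofReal_mul, ← Complex.ofReal_mul, ← Complex.ofReal_add, Complex.ofReal_eq_one]
  field_simp
  nlinarith [hs]

lemma uvec_inj (d N : ℕ) (hd : 2 ≤ d) {k j : Fin N}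
    (h : proj (uvec d N hd k) = proj (uvec d N hd j)) : k = j := by
  set a0 : Fin d := ⟨0, by omega⟩
  set a1 : Fin d := ⟨1, by omega⟩
  have h01 : a0 ≠ a1 := by simp [a0, a1, Fin.ext_iff]
  have he : ∀ i i', proj (uvec d N hd k) i i' = proj (uvec d N hd j) i i' := Matrix.ext_iff.mpr h
  set ck : ℝ := (Real.sqrt (1 + (k:ℝ)^2))⁻¹ with hck
  set cj : ℝ := (Real.sqrt (1 + (j:ℝ)^2))⁻¹ with hcj
  have hckpos : 0 < ck := by rw [hck]; positivity
  have hcjpos : 0 < cj := by rw [hcj]; positivity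
  have e0k : uvec d N hd k a0 = (ck : ℂ) := by simp [uvec, a0, ck]
  have e1k : uvec d N hd k a1 = ((ck * (k:ℝ) : ℝ) : ℂ) := by
    simp [uvec, a1, if_neg h01.symm, Fin.ext_iff, ck]
  have e0j : uvec d N hd j a0 = (cj : ℂ) := by simp [uvec, a0, cj]
  have e1j : uvec d N hd j a1 = ((cj * (j:ℝ) : ℝ) : ℂ) := by
    simp [uvec, a1, if_neg h01.symm, Fin.ext_iff, cj]
  have h00 := he a0 a0
  have h10 := he a1 a0
  simp only [proj, vecMulVec_apply, Pi.star_apply, e0k, e0j, e1k, e1j, Complex.star_def,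
    Complex.conj_ofReal] at h00 h10
  rw [← Complex.ofReal_mul, ← Complex.ofReal_mul, Complex.ofReal_inj] at h00
  rw [← Complex.ofReal_mul, ← Complex.ofReal_mul, Complex.ofReal_inj] at h10
  have hkr : (k:ℝ) = (j:ℝ) := by
    have hck2 : ck * ck ≠ 0 := by positivity
    have : ck * ck * (k:ℝ) = ck * ck * (j:ℝ) := by nlinarith [h00, h10]
    exact mul_left_cancel₀ hck2 this
  have : (k : ℕ) = (j : ℕ) := Nat.cast_injective hkr
  exact Fin.ext this


/-- If `{F λ}` is a frame for the Hermitian matrices (a spanning family of Hermitian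
operators summing to the identity) and `{D λ}` is a dual frame to it (with unit-trace
elements), then for `d ≥ 2` it is impossible that all `F λ` and all `D λ` are
simultaneously positive semidefinite. -/
theorem no_positive_frame_and_dual (d : ℕ) (hd : 2 ≤ d) (Λ : Type) [Fintype Λ]
    (F D : Λ → Matrix (Fin d) (Fin d) ℂ)
    (hFH : ∀ l, (F l).IsHermitian) (hDH : ∀ l, (D l).IsHermitian)
    (hspan : ∀ A : Matrix (Fin d) (Fin d) ℂ, A.IsHermitian →
      ∃ c : Λ → ℝ, A = ∑ l, (c l : ℂ) • F l)
    (hdual : ∀ A : Matrix (Fin d) (Fin d) ℂ, A.IsHermitian →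
      A = ∑ l, (F l * A).trace • D l)
    (hsum : ∑ l, F l = 1) (htr : ∀ l, (D l).trace = 1) :
    ¬ ((∀ l, (F l).PosSemidef) ∧ (∀ l, (D l).PosSemidef)) := by
  rintro ⟨hFP, hDP⟩
  set N := Fintype.card Λ with hN
  have key : ∀ k : Fin (N + 1), ∃ l : Λ, D l = proj (uvec d (N+1) hd k) := by
    intro k
    set ψ := uvec d (N+1) hd k with hψdef
    have hψ : dotProduct (star ψ) ψ = 1 := uvec_norm d (N+1) hd k
    set P := proj ψ with hPdef
    have hPtr : P.trace = 1 := proj_trace ψ hψ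
    have hPpsd : P.PosSemidef := proj_psd ψ
    have hPher : P.IsHermitian := proj_herm ψ
    set f : Λ → ℂ := fun l => (F l * P).trace with hf
    set g : Λ → ℂ := fun l => (D l * P).trace with hg
    have hfnn : ∀ l, 0 ≤ f l := fun l => trace_mul_psd_nonneg (hFP l) hPpsd
    have hgub : ∀ l, 0 ≤ 1 - g l := by
      intro l
      have := trace_mul_psd_nonneg (hDP l) (one_sub_proj_psd ψ hψ)
      rwa [Matrix.mul_sub, Matrix.mul_one, trace_sub, htr l] at this
    have hfsum : ∑ l, f l = 1 := by
      have : ∑ l, F l * P = (1 : Matrix (Fin d) (Fin d) ℂ) * P := by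
        rw [← Finset.sum_mul, hsum]
      calc ∑ l, f l = (∑ l, F l * P).trace := by rw [trace_sum]
        _ = 1 := by rw [this, Matrix.one_mul, hPtr]
    have hfg : ∑ l, f l * g l = 1 := by
      have hdP := hdual P hPher
      have := congrArg (fun M => (P * M).trace) hdP
      simp only [Matrix.mul_sum, Matrix.mul_smul, trace_sum, trace_smul, smul_eq_mul] at this
      rw [proj_mul_proj ψ hψ, hPtr] at this
      rw [this]
      apply Finset.sum_congr rfl
      intro l _
      rw [trace_mul_comm (P) (D l)]
    have hzero : ∀ l ∈ Finset.univ, f l * (1 - g l) = 0 := by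
      rw [← Finset.sum_eq_zero_iff_of_nonneg]
      · have : ∑ l, f l * (1 - g l) = (∑ l, f l) - ∑ l, f l * g l := by
          rw [← Finset.sum_sub_distrib]; congr 1; ext l; ring
        rw [this, hfsum, hfg, sub_self]
      · exact fun l _ => mul_nonneg (hfnn l) (hgub l)
    obtain ⟨l, hl⟩ : ∃ l, f l ≠ 0 := by
      by_contra hc
      push_neg at hc
      rw [Finset.sum_eq_zero (fun l _ => hc l)] at hfsum
      exact zero_ne_one hfsum
    have hgl : g l = 1 := by
      have := hzero l (Finset.mem_univ l)
      rcases mul_eq_zero.mp this with h | h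
      · exact absurd h hl
      · have := sub_eq_zero.mp h
        exact this.symm
    exact ⟨l, absorb ψ hψ (hDP l) (htr l) hgl⟩
  choose χ hχ using key
  have hinj : Function.Injective χ := by
    intro k j hkj
    exact uvec_inj d (N+1) hd (by rw [← hχ k, ← hχ j, hkj])
  have := Fintype.card_le_of_injective χ hinj
  rw [Fintype.card_fin, ← hN] at this
  omega
end

section
/- Let {ψ_k^n} (n = 0,…,d; k = 0,…,d−1) be d+1 mutually unbiased orthonormal bases of C^d and P(n,k) = |ψ_k^n⟩⟨ψ_k^n|. Then every density operator ρ satisfies ρ = Σ_{n=0}^{d} Σ_{k=0}^{d−1} Tr(ρP(n,k))·P(n,k) − 𝟙. -/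
open Matrix
open scoped ComplexOrder

section MubAuxSection
open Finset

namespace MubRec
local notation "conj" => starRingEnd ℂ


lemma comm3 {α β γ : Type*} [Fintype α] [Fintype β] [Fintype γ] (g : α → β → γ → ℂ) :
    ∑ q, ∑ m, ∑ m', g q m m' = ∑ m, ∑ m', ∑ q, g q m m' := by
  rw [Finset.sum_comm]
  exact Finset.sum_congr rfl fun m _ => Finset.sum_comm

lemma Lfact {ι : Type*} [Fintype ι] (v w : ι → ℂ) :
    ∑ p, ∑ q, (v p * conj (v q)) * conj (w p * conj (w q)) =
      (∑ p, v p * conj (w p)) * conj (∑ p, v p * conj (w p)) := by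
  have h : ∀ p q : ι, (v p * conj (v q)) * conj (w p * conj (w q)) =
      (v p * conj (w p)) * conj (v q * conj (w q)) := by
    intro p q; simp only [_root_.map_mul, Complex.conj_conj]; ring
  simp only [h]
  rw [_root_.map_sum, Finset.sum_mul_sum]

lemma L1 {ι κ : Type*} [Fintype ι] [Fintype κ] (v : κ → ι → ℂ) :
    ∑ p, ∑ q, (∑ m, v m p * conj (v m q)) * conj (∑ m, v m p * conj (v m q))
    = ∑ m, ∑ m', (∑ p, v m p * conj (v m' p)) * conj (∑ p, v m p * conj (v m' p)) := by
  have step : ∀ p q : ι, (∑ m, v m p * conj (v m q)) * conj (∑ m, v m p * conj (v m q))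
      = ∑ m, ∑ m', (v m p * conj (v m q)) * conj (v m' p * conj (v m' q)) := by
    intro p q
    rw [_root_.map_sum, Finset.sum_mul_sum]
  calc ∑ p, ∑ q, (∑ m, v m p * conj (v m q)) * conj (∑ m, v m p * conj (v m q))
      = ∑ p, ∑ q, ∑ m, ∑ m', (v m p * conj (v m q)) * conj (v m' p * conj (v m' q)) := by
        simp only [step]
    _ = ∑ p, ∑ m, ∑ m', ∑ q, (v m p * conj (v m q)) * conj (v m' p * conj (v m' q)) :=
        Finset.sum_congr rfl fun p _ => comm3 _
    _ = ∑ m, ∑ m', ∑ p, ∑ q, (v m p * conj (v m q)) * conj (v m' p * conj (v m' q)) :=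
        comm3 _
    _ = ∑ m, ∑ m', (∑ p, v m p * conj (v m' p)) * conj (∑ p, v m p * conj (v m' p)) :=
        Finset.sum_congr rfl fun m _ => Finset.sum_congr rfl fun m' _ => Lfact (v m) (v m')


variable {d : ℕ} (ψ : Fin (d + 1) → Fin d → (Fin d → ℂ))

/-- inner product, ordered to match hmub -/
noncomputable def c (n n' : Fin (d + 1)) (k k' : Fin d) : ℂ :=
  ∑ a, ψ n k a * conj (ψ n' k' a)

variable (hmub : ∀ n n' k k', (‖∑ i, star (ψ n' k' i) * ψ n k i‖) ^ 2 =
      (if k = k' then 1 else 0) * (if n = n' then 1 else 0) +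
        (1 / (d : ℝ)) * (1 - (if n = n' then 1 else 0)))

include hmub

lemma hc (n n' : Fin (d + 1)) (k k' : Fin d) :
    c ψ n n' k k' * conj (c ψ n n' k k') =
      (((if k = k' then 1 else 0) * (if n = n' then 1 else 0) +
        (1 / (d : ℝ)) * (1 - (if n = n' then 1 else 0)) : ℝ) : ℂ) := by
  have h := hmub n n' k k'
  rw [Complex.sq_norm] at h
  have hce : (∑ i, star (ψ n' k' i) * ψ n k i) = c ψ n n' k k' := by
    unfold c; exact Finset.sum_congr rfl fun i _ => by rw [mul_comm]; rfl
  rw [hce] at h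
  rw [Complex.mul_conj, h]

lemma hnorm (n : Fin (d + 1)) (k : Fin d) : c ψ n n k k = 1 := by
  have h := hc ψ hmub n n k k
  simp only [if_pos rfl, sub_self, mul_zero, one_mul, add_zero] at h
  have hr : c ψ n n k k = ((∑ a, Complex.normSq (ψ n k a) : ℝ) : ℂ) := by
    unfold c
    push_cast
    exact Finset.sum_congr rfl fun a _ => (Complex.mul_conj _)
  set r : ℝ := ∑ a, Complex.normSq (ψ n k a) with hrdef
  have hrnn : 0 ≤ r := Finset.sum_nonneg fun a _ => Complex.normSq_nonneg _
  rw [hr, Complex.conj_ofReal] at h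
  norm_num at h
  have h2 : r * r = 1 := by exact_mod_cast h
  have : r = 1 := by nlinarith
  rw [hr, this]; norm_num

end MubRec

namespace MubRec2
open MubRec
local notation "conj" => starRingEnd ℂ
variable {d : ℕ} (ψ : Fin (d + 1) → Fin d → (Fin d → ℂ))

/-- rank-one "vectorized projector" -/
noncomputable def u (m : Fin (d + 1) × Fin d) : Fin d × Fin d → ℂ :=
  fun p => ψ m.1 m.2 p.1 * conj (ψ m.1 m.2 p.2)

/-- vectorized identity (maximally entangled vector) -/
noncomputable def e : Fin d × Fin d → ℂ := fun p => if p.1 = p.2 then 1 else 0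

lemma hu (m m' : Fin (d + 1) × Fin d) :
    ∑ p, u ψ m p * conj (u ψ m' p) =
      c ψ m.1 m'.1 m.2 m'.2 * conj (c ψ m.1 m'.1 m.2 m'.2) := by
  have h : ∀ p : Fin d × Fin d, u ψ m p * conj (u ψ m' p) =
      (ψ m.1 m.2 p.1 * conj (ψ m'.1 m'.2 p.1)) * (conj (ψ m.1 m.2 p.2) * ψ m'.1 m'.2 p.2) := by
    intro p; unfold u; simp only [_root_.map_mul, Complex.conj_conj]; ring
  simp only [h]
  rw [Fintype.sum_prod_type]
  dsimp only
  rw [← Finset.sum_mul_sum]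
  congr 1
  unfold c
  rw [_root_.map_sum]
  exact Finset.sum_congr rfl fun b _ => by rw [_root_.map_mul, Complex.conj_conj]

lemma conj_e (p : Fin d × Fin d) : conj (e p) = (e p : ℂ) := by
  unfold e; split <;> simp

variable (hmub : ∀ n n' k k', (‖∑ i, star (ψ n' k' i) * ψ n k i‖) ^ 2 =
      (if k = k' then 1 else 0) * (if n = n' then 1 else 0) +
        (1 / (d : ℝ)) * (1 - (if n = n' then 1 else 0)))

include hmub

lemma hue (m : Fin (d + 1) × Fin d) : ∑ p, u ψ m p * conj (e p) = 1 := by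
  have h : ∀ p : Fin d × Fin d, u ψ m p * conj (e p) =
      (ψ m.1 m.2 p.1 * conj (ψ m.1 m.2 p.2)) * (if p.1 = p.2 then 1 else 0) := by
    intro p; rw [conj_e]; rfl
  simp only [h]
  rw [Fintype.sum_prod_type]
  dsimp only
  have h2 : ∀ a : Fin d, (∑ b, (ψ m.1 m.2 a * conj (ψ m.1 m.2 b)) * (if a = b then 1 else 0))
      = ψ m.1 m.2 a * conj (ψ m.1 m.2 a) := by
    intro a
    rw [Finset.sum_eq_single a]
    · simp
    · intro b _ hb; simp [Ne.symm hb]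
    · simp
  simp only [h2]
  exact hnorm ψ hmub m.1 m.2

lemma heu (m : Fin (d + 1) × Fin d) : ∑ p, (e p : ℂ) * conj (u ψ m p) = 1 := by
  have : ∀ p : Fin d × Fin d, (e p : ℂ) * conj (u ψ m p) = conj (u ψ m p * conj (e p)) := by
    intro p; rw [_root_.map_mul, Complex.conj_conj]; ring
  simp only [this]
  rw [← _root_.map_sum, hue ψ hmub m, _root_.map_one]

end MubRec2

namespace MubRec3
open MubRec MubRec2
local notation "conj" => starRingEnd ℂ
variable {d : ℕ}

lemma hee : ∑ p : Fin d × Fin d, (e p : ℂ) * conj (e p) = (d : ℂ) := by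
  have : ∀ p : Fin d × Fin d, (e p : ℂ) * conj (e p) = if p.1 = p.2 then 1 else 0 := by
    intro p; rw [conj_e]; unfold e; split <;> simp
  simp only [this]
  rw [Fintype.sum_prod_type]
  dsimp only
  have h2 : ∀ a : Fin d, (∑ b : Fin d, if a = b then (1:ℂ) else 0) = 1 := by
    intro a; rw [Finset.sum_eq_single a] <;> simp +contextual [Ne.symm]
  simp only [h2]
  simp

/-- the fourth-moment real sum -/
lemma val_sum (hd : 1 ≤ d) :
    ∑ m : Fin (d + 1) × Fin d, ∑ m' : Fin (d + 1) × Fin d,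
      ((((if m.2 = m'.2 then 1 else 0) * (if m.1 = m'.1 then 1 else 0) +
        (1 / (d : ℝ)) * (1 - (if m.1 = m'.1 then 1 else 0)) : ℝ))^2 : ℂ) = 2 * d * (d + 1) := by
  have hd0 : (d : ℝ) ≠ 0 := by positivity
  have hval : ∀ m m' : Fin (d + 1) × Fin d,
      ((((if m.2 = m'.2 then 1 else 0) * (if m.1 = m'.1 then 1 else 0) +
        (1 / (d : ℝ)) * (1 - (if m.1 = m'.1 then 1 else 0)) : ℝ))^2 : ℂ)
      = if m.1 = m'.1 then (if m.2 = m'.2 then 1 else 0) else (1 / (d:ℂ))^2 := by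
    intro m m'
    split_ifs <;> push_cast <;> field_simp <;> ring
  simp only [hval]
  have hd0' : (d : ℂ) ≠ 0 := by exact_mod_cast hd0
  have inner : ∀ m : Fin (d + 1) × Fin d, ∑ m' : Fin (d + 1) × Fin d,
      (if m.1 = m'.1 then (if m.2 = m'.2 then (1:ℂ) else 0) else (1/(d:ℂ))^2) = 2 := by
    intro m
    rw [Fintype.sum_prod_type]
    have hk : ∀ n' : Fin (d + 1),
        (∑ k' : Fin d, if m.1 = n' then (if m.2 = k' then (1:ℂ) else 0) else (1/(d:ℂ))^2)
        = if m.1 = n' then 1 else (1/(d:ℂ)) := by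
      intro n'
      split_ifs with h
      · rw [Finset.sum_eq_single m.2] <;> simp +contextual [Ne.symm]
      · rw [Finset.sum_const, Finset.card_univ, Fintype.card_fin, nsmul_eq_mul]
        field_simp
    simp only [hk]
    rw [← Finset.add_sum_erase _ _ (Finset.mem_univ m.1), if_pos rfl]
    have : ∀ n' ∈ Finset.univ.erase m.1, (if m.1 = n' then (1:ℂ) else (1/(d:ℂ))) = 1/(d:ℂ) := by
      intro n' hn'
      rw [if_neg (Ne.symm (Finset.ne_of_mem_erase hn'))]
    rw [Finset.sum_congr rfl this, Finset.sum_const, Finset.card_erase_of_mem (Finset.mem_univ m.1),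
      Finset.card_univ, Fintype.card_fin, nsmul_eq_mul]
    push_cast
    field_simp
    norm_num
  simp only [inner]
  rw [Finset.sum_const, Finset.card_univ, Fintype.card_prod, Fintype.card_fin, Fintype.card_fin,
    nsmul_eq_mul]
  push_cast
  ring

variable (ψ : Fin (d + 1) → Fin d → (Fin d → ℂ))
variable (hmub : ∀ n n' k k', (‖∑ i, star (ψ n' k' i) * ψ n k i‖) ^ 2 =
      (if k = k' then 1 else 0) * (if n = n' then 1 else 0) +
        (1 / (d : ℝ)) * (1 - (if n = n' then 1 else 0)))

include hmub

lemma T1 (hd : 1 ≤ d) :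
    ∑ p : Fin d × Fin d, ∑ q : Fin d × Fin d,
      (∑ m : Fin (d+1) × Fin d, u ψ m p * conj (u ψ m q)) *
        conj (∑ m : Fin (d+1) × Fin d, u ψ m p * conj (u ψ m q)) = 2 * d * (d + 1) := by
  rw [L1 (fun m : Fin (d+1) × Fin d => u ψ m)]
  rw [← val_sum hd]
  refine Finset.sum_congr rfl fun m _ => Finset.sum_congr rfl fun m' _ => ?_
  rw [hu ψ m m', hc ψ hmub m.1 m'.1 m.2 m'.2, Complex.conj_ofReal]
  rw [← Complex.ofReal_mul, ← sq]
  push_cast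
  ring

lemma hApp : ∑ p : Fin d × Fin d, ∑ m : Fin (d+1) × Fin d, u ψ m p * conj (u ψ m p)
    = ((d:ℂ) + 1) * d := by
  rw [Finset.sum_comm]
  have : ∀ m : Fin (d+1) × Fin d, ∑ p : Fin d × Fin d, u ψ m p * conj (u ψ m p) = 1 := by
    intro m
    rw [hu ψ m m, hnorm ψ hmub m.1 m.2]
    simp
  simp only [this]
  rw [Finset.sum_const, Finset.card_univ, Fintype.card_prod, Fintype.card_fin, Fintype.card_fin,
    nsmul_eq_mul]
  push_cast
  ring

lemma T2 : ∑ p : Fin d × Fin d, ∑ q : Fin d × Fin d,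
      (∑ m : Fin (d+1) × Fin d, u ψ m p * conj (u ψ m q)) *
        conj (if p = q then (1:ℂ) else 0) = ((d:ℂ) + 1) * d := by
  have hcollapse : ∀ p : Fin d × Fin d, (∑ q : Fin d × Fin d,
      (∑ m : Fin (d+1) × Fin d, u ψ m p * conj (u ψ m q)) * conj (if p = q then (1:ℂ) else 0))
      = ∑ m : Fin (d+1) × Fin d, u ψ m p * conj (u ψ m p) := by
    intro p
    rw [Finset.sum_eq_single p]
    · simp
    · intro q _ hq; simp [Ne.symm hq]
    · simp
  simp only [hcollapse]
  exact hApp ψ hmub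

lemma T4 : ∑ p : Fin d × Fin d, ∑ q : Fin d × Fin d,
      (if p = q then (1:ℂ) else 0) *
        conj (∑ m : Fin (d+1) × Fin d, u ψ m p * conj (u ψ m q)) = ((d:ℂ) + 1) * d := by
  have hcollapse : ∀ p : Fin d × Fin d, (∑ q : Fin d × Fin d,
      (if p = q then (1:ℂ) else 0) * conj (∑ m : Fin (d+1) × Fin d, u ψ m p * conj (u ψ m q)))
      = conj (∑ m : Fin (d+1) × Fin d, u ψ m p * conj (u ψ m p)) := by
    intro p
    rw [Finset.sum_eq_single p]
    · simp
    · intro q _ hq; simp [Ne.symm hq]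
    · simp
  simp only [hcollapse]
  rw [← _root_.map_sum, hApp ψ hmub]
  simp [_root_.map_mul]

omit hmub in
lemma pull3 (f : (Fin d × Fin d) → (Fin d × Fin d) → (Fin (d+1) × Fin d) → ℂ) :
    ∑ p, ∑ q, ∑ m, f p q m = ∑ m, ∑ p, ∑ q, f p q m :=
  (comm3 f).trans (comm3 _)

lemma T3 : ∑ p : Fin d × Fin d, ∑ q : Fin d × Fin d,
      (∑ m : Fin (d+1) × Fin d, u ψ m p * conj (u ψ m q)) *
        conj ((e p : ℂ) * conj (e q)) = ((d:ℂ) + 1) * d := by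
  have hswap : ∀ p q : Fin d × Fin d,
      (∑ m : Fin (d+1) × Fin d, u ψ m p * conj (u ψ m q)) * conj ((e p : ℂ) * conj (e q))
      = ∑ m : Fin (d+1) × Fin d, (u ψ m p * conj (u ψ m q)) * conj ((e p : ℂ) * conj (e q)) := by
    intro p q; rw [Finset.sum_mul]
  simp only [hswap]
  rw [pull3]
  have hper : ∀ m : Fin (d+1) × Fin d, ∑ p : Fin d × Fin d, ∑ q : Fin d × Fin d,
      (u ψ m p * conj (u ψ m q)) * conj ((e p : ℂ) * conj (e q)) = 1 := by
    intro m
    rw [Lfact (u ψ m) e, hue ψ hmub m]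
    simp
  simp only [hper]
  rw [Finset.sum_const, Finset.card_univ, Fintype.card_prod, Fintype.card_fin, Fintype.card_fin,
    nsmul_eq_mul]
  push_cast
  ring

lemma T5 : ∑ p : Fin d × Fin d, ∑ q : Fin d × Fin d,
      ((e p : ℂ) * conj (e q)) *
        conj (∑ m : Fin (d+1) × Fin d, u ψ m p * conj (u ψ m q)) = ((d:ℂ) + 1) * d := by
  have hswap : ∀ p q : Fin d × Fin d,
      ((e p : ℂ) * conj (e q)) * conj (∑ m : Fin (d+1) × Fin d, u ψ m p * conj (u ψ m q))
      = ∑ m : Fin (d+1) × Fin d, ((e p : ℂ) * conj (e q)) * conj (u ψ m p * conj (u ψ m q)) := by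
    intro p q; rw [_root_.map_sum, Finset.mul_sum]
  simp only [hswap]
  rw [pull3]
  have hper : ∀ m : Fin (d+1) × Fin d, ∑ p : Fin d × Fin d, ∑ q : Fin d × Fin d,
      ((e p : ℂ) * conj (e q)) * conj (u ψ m p * conj (u ψ m q)) = 1 := by
    intro m
    rw [Lfact e (u ψ m), heu ψ hmub m]
    simp
  simp only [hper]
  rw [Finset.sum_const, Finset.card_univ, Fintype.card_prod, Fintype.card_fin, Fintype.card_fin,
    nsmul_eq_mul]
  push_cast
  ring

omit hmub in
lemma T6 : ∑ p : Fin d × Fin d, ∑ q : Fin d × Fin d,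
    (if p = q then (1:ℂ) else 0) * conj (if p = q then (1:ℂ) else 0) = (d:ℂ) * d := by
  have hcollapse : ∀ p : Fin d × Fin d, (∑ q : Fin d × Fin d,
      (if p = q then (1:ℂ) else 0) * conj (if p = q then (1:ℂ) else 0)) = 1 := by
    intro p
    rw [Finset.sum_eq_single p]
    · simp
    · intro q _ hq; simp [Ne.symm hq]
    · simp
  simp only [hcollapse]
  rw [Finset.sum_const, Finset.card_univ]
  simp

omit hmub in
lemma T7 : ∑ p : Fin d × Fin d, ∑ q : Fin d × Fin d,
    (if p = q then (1:ℂ) else 0) * conj ((e p : ℂ) * conj (e q)) = (d:ℂ) := by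
  have hcollapse : ∀ p : Fin d × Fin d, (∑ q : Fin d × Fin d,
      (if p = q then (1:ℂ) else 0) * conj ((e p : ℂ) * conj (e q)))
      = conj ((e p : ℂ) * conj (e p)) := by
    intro p
    rw [Finset.sum_eq_single p]
    · simp
    · intro q _ hq; simp [Ne.symm hq]
    · simp
  simp only [hcollapse]
  rw [← _root_.map_sum, hee]
  simp

omit hmub in
lemma T8 : ∑ p : Fin d × Fin d, ∑ q : Fin d × Fin d,
    ((e p : ℂ) * conj (e q)) * conj (if p = q then (1:ℂ) else 0) = (d:ℂ) := by
  have hcollapse : ∀ p : Fin d × Fin d, (∑ q : Fin d × Fin d,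
      ((e p : ℂ) * conj (e q)) * conj (if p = q then (1:ℂ) else 0))
      = (e p : ℂ) * conj (e p) := by
    intro p
    rw [Finset.sum_eq_single p]
    · simp
    · intro q _ hq; simp [Ne.symm hq]
    · simp
  simp only [hcollapse]
  exact hee

omit hmub in
lemma T9 : ∑ p : Fin d × Fin d, ∑ q : Fin d × Fin d,
    ((e p : ℂ) * conj (e q)) * conj ((e p : ℂ) * conj (e q)) = (d:ℂ) * d := by
  rw [Lfact e e, hee]
  simp

/-- the 2-design identity -/
lemma key (hd : 1 ≤ d) (p q : Fin d × Fin d) :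
    (∑ m : Fin (d+1) × Fin d, u ψ m p * conj (u ψ m q)) =
      (if p = q then (1:ℂ) else 0) + (e p : ℂ) * conj (e q) := by
  set A : (Fin d × Fin d) → (Fin d × Fin d) → ℂ :=
    fun p q => ∑ m : Fin (d+1) × Fin d, u ψ m p * conj (u ψ m q) with hA
  set G : (Fin d × Fin d) → (Fin d × Fin d) → ℂ :=
    fun p q => A p q - (if p = q then (1:ℂ) else 0) - (e p : ℂ) * conj (e q) with hG
  have hS : ∑ p : Fin d × Fin d, ∑ q : Fin d × Fin d, G p q * conj (G p q) = 0 := by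
    have hexp : ∀ p q : Fin d × Fin d, G p q * conj (G p q) =
        A p q * conj (A p q)
        - A p q * conj (if p = q then (1:ℂ) else 0)
        - A p q * conj ((e p : ℂ) * conj (e q))
        - (if p = q then (1:ℂ) else 0) * conj (A p q)
        - ((e p : ℂ) * conj (e q)) * conj (A p q)
        + (if p = q then (1:ℂ) else 0) * conj (if p = q then (1:ℂ) else 0)
        + (if p = q then (1:ℂ) else 0) * conj ((e p : ℂ) * conj (e q))
        + ((e p : ℂ) * conj (e q)) * conj (if p = q then (1:ℂ) else 0)
        + ((e p : ℂ) * conj (e q)) * conj ((e p : ℂ) * conj (e q)) := by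
      intro p q
      simp only [hG, _root_.map_sub]
      ring
    simp only [hexp]
    simp only [Finset.sum_add_distrib, Finset.sum_sub_distrib]
    rw [T1 ψ hmub hd, T2 ψ hmub, T3 ψ hmub, T4 ψ hmub, T5 ψ hmub, T6, T7, T8, T9]
    ring
  have hnn : ∀ p ∈ (Finset.univ : Finset (Fin d × Fin d)), ∀ q ∈ (Finset.univ : Finset (Fin d × Fin d)),
      G p q * conj (G p q) = (Complex.normSq (G p q) : ℂ) := fun p _ q _ => Complex.mul_conj _
  have hS' : ∑ p : Fin d × Fin d, ∑ q : Fin d × Fin d, (Complex.normSq (G p q) : ℝ) = 0 := by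
    have : ((∑ p : Fin d × Fin d, ∑ q : Fin d × Fin d, (Complex.normSq (G p q) : ℝ) : ℝ) : ℂ) = 0 := by
      push_cast
      rw [← hS]
      exact Finset.sum_congr rfl fun p _ => Finset.sum_congr rfl fun q _ =>
        (Complex.mul_conj _).symm
    exact_mod_cast this
  have hzero : Complex.normSq (G p q) = 0 := by
    have h1 := (Finset.sum_eq_zero_iff_of_nonneg (fun p _ =>
      Finset.sum_nonneg fun q _ => Complex.normSq_nonneg (G p q))).mp hS' p (Finset.mem_univ p)
    have h2 := (Finset.sum_eq_zero_iff_of_nonneg (fun q _ =>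
      Complex.normSq_nonneg (G p q))).mp h1 q (Finset.mem_univ q)
    exact h2
  have hGz : G p q = 0 := Complex.normSq_eq_zero.mp hzero
  simp only [hG] at hGz
  show A p q = _
  linear_combination hGz

end MubRec3

end MubAuxSection

/-- MUB reconstruction formula: given a full set of `d+1` mutually unbiased orthonormal
bases `ψ^n_k` of `ℂ^d` with projectors `P(n,k) = |ψ^n_k⟩⟨ψ^n_k|`, every density operator
satisfies `ρ = ∑_{n,k} Tr(ρ P(n,k)) • P(n,k) − 𝟙`. -/
theorem mub_reconstruction (d : ℕ) (hd : 1 ≤ d)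
    (ψ : Fin (d + 1) → Fin d → (Fin d → ℂ))
    (hmub : ∀ n n' k k', (‖∑ i, star (ψ n' k' i) * ψ n k i‖) ^ 2 =
      (if k = k' then 1 else 0) * (if n = n' then 1 else 0) +
        (1 / (d : ℝ)) * (1 - (if n = n' then 1 else 0)))
    (P : Fin (d + 1) → Fin d → Matrix (Fin d) (Fin d) ℂ)
    (hP : ∀ n k, P n k = vecMulVec (ψ n k) (star (ψ n k)))
    (ρ : Matrix (Fin d) (Fin d) ℂ) (hρ : IsDensity ρ) :
    ρ = (∑ n, ∑ k, (ρ * P n k).trace • P n k) - 1 := by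
  classical
  obtain ⟨hpos, htr⟩ := hρ
  have htr' : ∑ a, ρ a a = 1 := by
    simpa [Matrix.trace, Matrix.diag] using htr
  ext x y
  simp only [Matrix.sub_apply, Matrix.sum_apply, Matrix.smul_apply, Matrix.one_apply,
    Matrix.trace, Matrix.diag, Matrix.mul_apply, hP, Matrix.vecMulVec_apply, Pi.star_apply,
    Complex.star_def, smul_eq_mul]
  have hstep : (∑ n, ∑ k, (∑ a, ∑ b, ρ a b * (ψ n k b * (starRingEnd ℂ) (ψ n k a))) *
      (ψ n k x * (starRingEnd ℂ) (ψ n k y))) = ρ x y + (if x = y then 1 else 0) := by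
    calc ∑ n, ∑ k, (∑ a, ∑ b, ρ a b * (ψ n k b * (starRingEnd ℂ) (ψ n k a))) *
        (ψ n k x * (starRingEnd ℂ) (ψ n k y))
        = ∑ n, ∑ k, ∑ a, ∑ b, ρ a b *
            (MubRec2.u ψ (n,k) (b,a) * (starRingEnd ℂ) (MubRec2.u ψ (n,k) (y,x))) := by
          refine Finset.sum_congr rfl fun n _ => Finset.sum_congr rfl fun k _ => ?_
          rw [Finset.sum_mul]
          refine Finset.sum_congr rfl fun a _ => ?_
          rw [Finset.sum_mul]
          refine Finset.sum_congr rfl fun b _ => ?_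
          simp only [MubRec2.u, _root_.map_mul, Complex.conj_conj]
          ring
      _ = ∑ m : Fin (d+1) × Fin d, ∑ a, ∑ b, ρ a b *
            (MubRec2.u ψ m (b,a) * (starRingEnd ℂ) (MubRec2.u ψ m (y,x))) := by
          rw [← Fintype.sum_prod_type']
      _ = ∑ a, ∑ b, ∑ m : Fin (d+1) × Fin d, ρ a b *
            (MubRec2.u ψ m (b,a) * (starRingEnd ℂ) (MubRec2.u ψ m (y,x))) := MubRec.comm3 _
      _ = ∑ a, ∑ b, ρ a b * ((if ((b,a) : Fin d × Fin d) = (y,x) then (1:ℂ) else 0) +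
            (MubRec2.e (b,a) : ℂ) * (starRingEnd ℂ) (MubRec2.e (y,x))) := by
          refine Finset.sum_congr rfl fun a _ => Finset.sum_congr rfl fun b _ => ?_
          rw [← Finset.mul_sum, MubRec3.key ψ hmub hd (b,a) (y,x)]
      _ = ρ x y + (if x = y then 1 else 0) := by
          simp only [mul_add, Finset.sum_add_distrib]
          congr 1
          · have h1 : ∀ a : Fin d, (∑ b, ρ a b *
                (if ((b,a) : Fin d × Fin d) = (y,x) then (1:ℂ) else 0)) =
                if x = a then ρ a y else 0 := by
              intro a
              rw [Finset.sum_eq_single y]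
              · by_cases h : a = x <;> simp [Prod.ext_iff, h, eq_comm]
              · intro b _ hb; simp [Prod.ext_iff, hb]
              · simp
            simp only [h1]
            simp [Finset.sum_ite_eq]
          · have h2 : ∀ a : Fin d, (∑ b, ρ a b *
                ((MubRec2.e (b,a) : ℂ) * (starRingEnd ℂ) (MubRec2.e (y,x)))) =
                ρ a a * (if x = y then 1 else 0) := by
              intro a
              rw [Finset.sum_eq_single a]
              · simp [MubRec2.e, eq_comm]
              · intro b _ hb; simp [MubRec2.e, hb]
              · simp
            simp only [h2]
            rw [← Finset.sum_mul, htr', one_mul]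
  rw [hstep]
  ring
end

section
/- The number of mutually unbiased bases in C^d is at most d + 1. -/
namespace MUBaux

open Finset

variable (d : ℕ)

/-- Hilbert–Schmidt-style pairing on flattened matrices. -/
noncomputable def ip (x y : Fin d × Fin d → ℂ) : ℂ := ∑ p, star (x p) * y p

/-- The rank-one projector `|e⟩⟨e|`, flattened. -/
noncomputable def Pv (e : Fin d → ℂ) : Fin d × Fin d → ℂ :=
  fun p => e p.1 * star (e p.2)

/-- The identity matrix, flattened. -/
noncomputable def idv : Fin d × Fin d → ℂ :=
  fun p => if p.1 = p.2 then (1 : ℂ) else 0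

lemma ip_smul_right (x y : Fin d × Fin d → ℂ) (c : ℂ) :
    ip d x (c • y) = c * ip d x y := by
  simp only [ip, Pi.smul_apply, smul_eq_mul, Finset.mul_sum]
  apply Finset.sum_congr rfl
  intro p _
  ring

lemma ip_sum_right {ι : Type*} (s : Finset ι) (x : Fin d × Fin d → ℂ)
    (f : ι → (Fin d × Fin d → ℂ)) :
    ip d x (∑ a ∈ s, f a) = ∑ a ∈ s, ip d x (f a) := by
  simp only [ip, Finset.sum_apply, Finset.mul_sum]
  exact Finset.sum_comm

lemma ip_sub_left (x y z : Fin d × Fin d → ℂ) :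
    ip d (x - y) z = ip d x z - ip d y z := by
  simp only [ip, Pi.sub_apply, star_sub, sub_mul, Finset.sum_sub_distrib]

lemma ip_sub_right (x y z : Fin d × Fin d → ℂ) :
    ip d x (y - z) = ip d x y - ip d x z := by
  simp only [ip, Pi.sub_apply, mul_sub, Finset.sum_sub_distrib]

lemma ip_smul_left (x y : Fin d × Fin d → ℂ) (c : ℂ) :
    ip d (c • x) y = star c * ip d x y := by
  simp only [ip, Pi.smul_apply, smul_eq_mul, star_mul, Finset.mul_sum]
  apply Finset.sum_congr rfl
  intro p _
  ring

lemma ip_zero_right (x : Fin d × Fin d → ℂ) : ip d x 0 = 0 := by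
  simp [ip]

lemma ip_Pv_Pv (e f : Fin d → ℂ) :
    ip d (Pv d e) (Pv d f)
      = (∑ i, star (e i) * f i) * star (∑ i, star (e i) * f i) := by
  simp only [ip, Pv, Fintype.sum_prod_type, star_sum, star_mul, star_star,
    Finset.sum_mul, Finset.mul_sum]
  rw [Finset.sum_comm]
  apply Finset.sum_congr rfl; intro j _
  apply Finset.sum_congr rfl; intro i _
  ring

lemma ip_Pv_idv (e : Fin d → ℂ) :
    ip d (Pv d e) (idv d) = ∑ i, star (e i) * e i := by
  simp only [ip, Pv, idv, Fintype.sum_prod_type,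
    mul_ite, mul_one, mul_zero, Finset.sum_ite_eq, Finset.mem_univ, if_true]
  apply Finset.sum_congr rfl; intro i _
  simp only [star_mul, star_star]
  ring

lemma ip_idv_Pv (e : Fin d → ℂ) :
    ip d (idv d) (Pv d e) = ∑ i, star (e i) * e i := by
  simp only [ip, Pv, idv, Fintype.sum_prod_type, apply_ite (star : ℂ → ℂ),
    star_one, star_zero, ite_mul, one_mul, zero_mul,
    Finset.sum_ite_eq, Finset.mem_univ, if_true]
  apply Finset.sum_congr rfl; intro i _
  ring

lemma ip_idv_idv : ip d (idv d) (idv d) = (d : ℂ) := by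
  simp only [ip, idv, Fintype.sum_prod_type]
  simp [apply_ite (star : ℂ → ℂ), Finset.sum_ite_eq]

end MUBaux

open Matrix

open MUBaux in
/-- The number of pairwise mutually unbiased orthonormal bases of `ℂ^d` is at most
`d + 1`. -/
theorem mub_card_le (d m : ℕ) (hd : 2 ≤ d)
    (B : Fin m → Fin d → (Fin d → ℂ))
    (horth : ∀ n k k', ∑ i, star (B n k i) * B n k' i =
      if k = k' then (1 : ℂ) else 0)
    (hunbiased : ∀ n n', n ≠ n' → ∀ k j,
      (‖∑ i, star (B n k i) * B n' j i‖) ^ 2 = 1 / (d : ℝ)) :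
    m ≤ d + 1 := by
  have hd0 : (d : ℂ) ≠ 0 := Nat.cast_ne_zero.mpr (by omega)
  have hPP : ∀ n n' k k', ip d (Pv d (B n k)) (Pv d (B n' k'))
      = if n = n' then (if k = k' then (1:ℂ) else 0) else (1 / d : ℂ) := by
    intro n n' k k'
    rw [ip_Pv_Pv]
    by_cases h : n = n'
    · subst h
      rw [horth]
      by_cases hk : k = k' <;> simp [hk]
    · simp only [h, if_false]
      set s := ∑ i, star (B n k i) * B n' k' i with hs
      have h1 : s * star s = (Complex.normSq s : ℂ) := Complex.mul_conj s
      rw [h1, ← Complex.sq_norm, hunbiased n n' h k k']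
      push_cast
      ring
  have hP1 : ∀ n k, ip d (Pv d (B n k)) (idv d) = 1 := by
    intro n k; rw [ip_Pv_idv, horth]; simp
  have h1P : ∀ n k, ip d (idv d) (Pv d (B n k)) = 1 := by
    intro n k; rw [ip_idv_Pv, horth]; simp
  set emb : Fin (d - 1) → Fin d := fun k => ⟨k.1, by omega⟩ with hemb
  have embinj : ∀ a b : Fin (d - 1), (emb a = emb b) ↔ a = b := by
    intro a b
    constructor
    · intro h
      apply Fin.ext
      simpa [hemb] using congrArg Fin.val h
    · rintro rfl; rfl
  obtain ⟨F, hF⟩ : ∃ F : (Fin m × Fin (d - 1)) ⊕ Unit → (Fin d × Fin d → ℂ),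
      F = fun a => match a with
        | Sum.inl (n, k) => Pv d (B n (emb k)) - (1 / d : ℂ) • idv d
        | Sum.inr _ => idv d := ⟨_, rfl⟩
  have hFll : ∀ (n n' : Fin m) (k k' : Fin (d - 1)),
      ip d (F (Sum.inl (n, k))) (F (Sum.inl (n', k')))
        = if n = n' then ((if k = k' then (1:ℂ) else 0) - 1 / (d:ℂ)) else 0 := by
    intro n n' k k'
    rw [hF]
    rw [ip_sub_left, ip_sub_right, ip_sub_right, ip_smul_left, ip_smul_left,
      ip_smul_right, ip_smul_right, hPP, hP1, h1P, ip_idv_idv]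
    have hstar : star (1 / (d:ℂ)) = 1 / (d:ℂ) := by
      simp [Complex.star_def, map_div₀]
    rw [hstar]
    by_cases h : n = n'
    · simp only [h, if_true, embinj]
      by_cases hk : k = k' <;> (simp only [hk, if_true, if_false]; field_simp <;> ring)
    · simp only [h, if_false]
      field_simp <;> ring
  have hFlr : ∀ (n : Fin m) (k : Fin (d - 1)) (u : Unit),
      ip d (F (Sum.inl (n, k))) (F (Sum.inr u)) = 0 := by
    intro n k u
    rw [hF]
    rw [ip_sub_left, ip_smul_left, hP1, ip_idv_idv]
    have hstar : star (1 / (d:ℂ)) = 1 / (d:ℂ) := by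
      simp [Complex.star_def, map_div₀]
    rw [hstar]
    field_simp <;> ring
  have hFrl : ∀ (u : Unit) (n : Fin m) (k : Fin (d - 1)),
      ip d (F (Sum.inr u)) (F (Sum.inl (n, k))) = 0 := by
    intro u n k
    rw [hF]
    rw [ip_sub_right, ip_smul_right, h1P, ip_idv_idv]
    field_simp <;> ring
  have hFrr : ∀ (u u' : Unit),
      ip d (F (Sum.inr u)) (F (Sum.inr u')) = (d : ℂ) := by
    intro u u'
    rw [hF]
    exact ip_idv_idv d
  have hli : LinearIndependent ℂ F := by
    rw [Fintype.linearIndependent_iff]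
    intro g hg
    have key : ∀ b, ∑ a, g a * ip d (F b) (F a) = 0 := by
      intro b
      have h0 : ip d (F b) (∑ a, g a • F a) = 0 := by rw [hg, ip_zero_right]
      rw [ip_sum_right] at h0
      simp only [ip_smul_right] at h0
      exact h0
    have hgr : g (Sum.inr ()) = 0 := by
      have h1 := key (Sum.inr ())
      rw [Fintype.sum_sum_type, Fintype.sum_prod_type] at h1
      simp only [hFrl, hFrr, mul_zero, Finset.sum_const_zero, zero_add,
        Finset.univ_unique, Finset.sum_singleton] at h1
      exact (mul_eq_zero.mp h1).resolve_right hd0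
    have hgl : ∀ n k, g (Sum.inl (n, k)) = (1 / d : ℂ) * ∑ k', g (Sum.inl (n, k')) := by
      intro n k
      have h1 := key (Sum.inl (n, k))
      rw [Fintype.sum_sum_type, Fintype.sum_prod_type] at h1
      simp only [hFlr, mul_zero, Finset.sum_const_zero, add_zero] at h1
      rw [Fintype.sum_eq_single n (fun x hx => by
        apply Finset.sum_eq_zero
        intro y _
        rw [hFll]
        simp [Ne.symm hx])] at h1
      simp only [hFll, if_true, eq_self_iff_true, mul_sub, mul_ite, mul_one,
        Finset.sum_sub_distrib, Finset.sum_ite_eq, Finset.mem_univ] at h1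
      rw [sub_eq_zero] at h1
      simp only [mul_zero, Finset.sum_ite_eq, Finset.mem_univ, if_true] at h1
      rw [h1, Finset.mul_sum]
      apply Finset.sum_congr rfl
      intro k' _
      ring
    have hS : ∀ n, (∑ k' : Fin (d - 1), g (Sum.inl (n, k'))) = 0 := by
      intro n
      have h2a : (∑ k' : Fin (d - 1), g (Sum.inl (n, k')))
          = ∑ _k' : Fin (d - 1), (1 / (d : ℂ)) * ∑ j, g (Sum.inl (n, j)) :=
        Finset.sum_congr rfl (fun k _ => hgl n k)
      rw [Finset.sum_const, Finset.card_univ, Fintype.card_fin, nsmul_eq_mul] at h2a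
      have hcast : ((d - 1 : ℕ) : ℂ) = (d : ℂ) - 1 := by
        push_cast [Nat.cast_sub (show 1 ≤ d by omega)]
        ring
      rw [hcast] at h2a
      have h2b : (∑ k' : Fin (d - 1), g (Sum.inl (n, k'))) * (d : ℂ)
          = ((d : ℂ) - 1) * ∑ k' : Fin (d - 1), g (Sum.inl (n, k')) := by
        rw [mul_comm]
        calc (d : ℂ) * ∑ k' : Fin (d - 1), g (Sum.inl (n, k'))
            = (d : ℂ) * (((d : ℂ) - 1) * (1 / (d : ℂ) * ∑ j, g (Sum.inl (n, j)))) := by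
              rw [← h2a]
          _ = ((d : ℂ) - 1) * ((d : ℂ) * (1 / (d : ℂ)) * ∑ j, g (Sum.inl (n, j))) := by
              ring
          _ = ((d : ℂ) - 1) * ∑ j, g (Sum.inl (n, j)) := by
              rw [mul_one_div_cancel hd0, one_mul]
      linear_combination h2b
    rintro (⟨n, k⟩ | ⟨⟩)
    · rw [hgl n k, hS n, mul_zero]
    · exact hgr
  have hcard := hli.fintype_card_le_finrank
  rw [Module.finrank_pi] at hcard
  simp only [Fintype.card_sum, Fintype.card_prod, Fintype.card_fin, Fintype.card_unit,
    Fintype.card_punit] at hcard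
  obtain ⟨e, rfl⟩ : ∃ e, d = e + 1 := ⟨d - 1, by omega⟩
  simp only [Nat.add_sub_cancel] at hcard
  have he : 1 ≤ e := by omega
  nlinarith [hcard, he]
end

section
/- Let {ψ_k^n} (n = 0,…,d; k = 0,…,d−1) be d+1 mutually unbiased bases of C^d and define probability tables μ(n,k) = Tr(ρ P(n,k)) with P(n,k) = |ψ_k^n⟩⟨ψ_k^n|. Then for any two density operators ρ, ρ' with tables μ, μ', the transition probability satisfies Tr(ρρ') = Σ_{n=0}^{d} Σ_{k=0}^{d−1} μ(n,k)·μ'(n,k) − 1. -/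
open Matrix
open scoped ComplexOrder

private lemma mubAux_sum_two {α β : Type*} [Fintype α] [Fintype β] (f : α → ℂ) (g : β → ℂ) :
    ∑ σ : α × β, f σ.1 * g σ.2 = (∑ i, f i) * (∑ j, g j) := by
  rw [Fintype.sum_prod_type, Finset.sum_mul_sum]

private lemma mubAux_sum_four {α : Type*} [Fintype α] (f g h e : α → ℂ) :
    (∑ σ : α × α × α × α, f σ.1 * g σ.2.1 * (h σ.2.2.1 * e σ.2.2.2))
      = (∑ i, f i) * (∑ i, g i) * ((∑ i, h i) * (∑ i, e i)) := by
  have h1 : (∑ σ : α × α × α × α, f σ.1 * g σ.2.1 * (h σ.2.2.1 * e σ.2.2.2))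
      = ∑ σ : α × α × α × α, f σ.1 * (g σ.2.1 * (h σ.2.2.1 * e σ.2.2.2)) :=
    Finset.sum_congr rfl fun σ _ => by ring
  rw [h1, mubAux_sum_two f (fun τ : α × α × α => g τ.1 * (h τ.2.1 * e τ.2.2)),
    mubAux_sum_two g (fun τ : α × α => h τ.1 * e τ.2), mubAux_sum_two h e]
  ring

private lemma mubAux_E_sum (d : ℕ) (hd : 1 ≤ d) :
    ∑ p : Fin (d+1) × Fin d, ∑ q : Fin (d+1) × Fin d,
      ((if p.2 = q.2 then (1:ℂ) else 0) * (if p.1 = q.1 then 1 else 0)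
        + (1/(d:ℂ)) * (1 - if p.1 = q.1 then 1 else 0))^2 = 2*(d:ℂ)^2 + 2*(d:ℂ) := by
  have hd0 : (d:ℂ) ≠ 0 := Nat.cast_ne_zero.mpr (by omega)
  have step : ∀ p q : Fin (d+1) × Fin d,
      ((if p.2 = q.2 then (1:ℂ) else 0) * (if p.1 = q.1 then 1 else 0)
        + (1/(d:ℂ)) * (1 - if p.1 = q.1 then 1 else 0))^2
      = 1/(d:ℂ)^2 + (if p.1 = q.1 then (if p.2 = q.2 then (1:ℂ) else 0) - 1/(d:ℂ)^2 else 0) := by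
    intro p q
    split_ifs <;> field_simp <;> ring
  simp only [step]
  simp [Fintype.sum_prod_type, Finset.sum_add_distrib, Finset.sum_ite_irrel,
    Finset.sum_ite_eq, Finset.sum_const, Finset.card_univ, Finset.sum_sub_distrib]
  field_simp
  ring

private lemma mubAux_collapse2 (d : ℕ) (φ : Fin d → ℂ)
    (hn : ∑ i, φ i * (starRingEnd ℂ) (φ i) = 1) :
    ∑ σ : Fin d × Fin d × Fin d × Fin d,
      φ σ.1 * (starRingEnd ℂ) (φ σ.2.1) * (φ σ.2.2.1 * (starRingEnd ℂ) (φ σ.2.2.2)) *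
        ((if σ.1 = σ.2.1 then 1 else 0) * (if σ.2.2.1 = σ.2.2.2 then 1 else 0)
          + (if σ.1 = σ.2.2.2 then 1 else 0) * (if σ.2.2.1 = σ.2.1 then 1 else 0))
      = 2 := by
  simp only [Fintype.sum_prod_type, mul_add, mul_ite, ite_mul, mul_one, mul_zero, one_mul,
    zero_mul, Finset.sum_add_distrib, Finset.sum_ite_irrel, Finset.sum_ite_eq,
    Finset.sum_ite_eq', Finset.mem_univ, if_true, Finset.sum_const_zero, add_zero, zero_add]
  have hn2 : ∑ x : Fin d, ∑ y : Fin d,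
      (φ x * (starRingEnd ℂ) (φ x)) * (φ y * (starRingEnd ℂ) (φ y)) = 1 := by
    rw [← Finset.sum_mul_sum, hn, one_mul]
  have e : ∀ x y : Fin d, φ x * (starRingEnd ℂ) (φ y) * (φ y * (starRingEnd ℂ) (φ x))
      = φ x * (starRingEnd ℂ) (φ x) * (φ y * (starRingEnd ℂ) (φ y)) := fun x y => by ring
  simp only [e, ← mul_assoc] at *
  rw [hn2]; norm_num

private lemma mubAux_collapse2' (d : ℕ) (φ : Fin d → ℂ)
    (hn : ∑ i, φ i * (starRingEnd ℂ) (φ i) = 1) :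
    ∑ σ : Fin d × Fin d × Fin d × Fin d,
      (starRingEnd ℂ) (φ σ.1) * φ σ.2.1 * ((starRingEnd ℂ) (φ σ.2.2.1) * φ σ.2.2.2) *
        ((if σ.1 = σ.2.1 then 1 else 0) * (if σ.2.2.1 = σ.2.2.2 then 1 else 0)
          + (if σ.1 = σ.2.2.2 then 1 else 0) * (if σ.2.2.1 = σ.2.1 then 1 else 0))
      = 2 := by
  simp only [Fintype.sum_prod_type, mul_add, mul_ite, ite_mul, mul_one, mul_zero, one_mul,
    zero_mul, Finset.sum_add_distrib, Finset.sum_ite_irrel, Finset.sum_ite_eq,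
    Finset.sum_ite_eq', Finset.mem_univ, if_true, Finset.sum_const_zero, add_zero, zero_add]
  have hn2 : ∑ x : Fin d, ∑ y : Fin d,
      (φ x * (starRingEnd ℂ) (φ x)) * (φ y * (starRingEnd ℂ) (φ y)) = 1 := by
    rw [← Finset.sum_mul_sum, hn, one_mul]
  have e : ∀ x y : Fin d, (starRingEnd ℂ) (φ x) * φ y * ((starRingEnd ℂ) (φ y) * φ x)
      = φ x * (starRingEnd ℂ) (φ x) * (φ y * (starRingEnd ℂ) (φ y)) := fun x y => by ring
  have e' : ∀ x y : Fin d, (starRingEnd ℂ) (φ x) * φ x * ((starRingEnd ℂ) (φ y) * φ y)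
      = φ x * (starRingEnd ℂ) (φ x) * (φ y * (starRingEnd ℂ) (φ y)) := fun x y => by ring
  simp only [e, e', ← mul_assoc] at *
  rw [hn2]; norm_num

private lemma mub_key (d : ℕ) (hd : 1 ≤ d)
    (ψ : Fin (d + 1) → Fin d → (Fin d → ℂ))
    (hmub : ∀ n n' k k', (‖∑ i, star (ψ n' k' i) * ψ n k i‖) ^ 2 =
      (if k = k' then 1 else 0) * (if n = n' then 1 else 0) +
        (1 / (d : ℝ)) * (1 - (if n = n' then 1 else 0)))
    (i j l m : Fin d) :
    (∑ p : Fin (d+1) × Fin d, ψ p.1 p.2 i * (starRingEnd ℂ) (ψ p.1 p.2 j) *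
        (ψ p.1 p.2 l * (starRingEnd ℂ) (ψ p.1 p.2 m)))
      = (if i = j then 1 else 0) * (if l = m then 1 else 0)
        + (if i = m then 1 else 0) * (if l = j then 1 else 0) := by
  classical
  set φ : Fin (d+1) × Fin d → Fin d → ℂ := fun p => ψ p.1 p.2 with hφ
  -- overlaps
  have ha : ∀ p q : Fin (d+1) × Fin d,
      (∑ i, φ p i * (starRingEnd ℂ) (φ q i)) *
          (starRingEnd ℂ) (∑ i, φ p i * (starRingEnd ℂ) (φ q i))
      = ((if p.2 = q.2 then (1:ℂ) else 0) * (if p.1 = q.1 then 1 else 0)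
          + (1/(d:ℂ)) * (1 - if p.1 = q.1 then 1 else 0)) := by
    intro p q
    have h := hmub p.1 q.1 p.2 q.2
    have e1 : (∑ i, star (ψ q.1 q.2 i) * ψ p.1 p.2 i)
        = ∑ i, φ p i * (starRingEnd ℂ) (φ q i) :=
      Finset.sum_congr rfl fun i _ => mul_comm _ _
    rw [e1] at h
    rw [Complex.mul_conj, ← Complex.sq_norm, h]
    split_ifs <;> push_cast <;> ring
  -- unit norms
  have hnorm : ∀ p, (∑ i, φ p i * (starRingEnd ℂ) (φ p i)) = 1 := by
    intro p
    have h := ha p p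
    simp only [if_pos rfl] at h
    have e : (∑ i, φ p i * (starRingEnd ℂ) (φ p i))
        = ((∑ i, Complex.normSq (φ p i) : ℝ) : ℂ) := by
      push_cast
      exact Finset.sum_congr rfl fun i _ => (Complex.mul_conj _)
    rw [e] at h ⊢
    rw [Complex.conj_ofReal, ← Complex.ofReal_mul] at h
    have h2 : (∑ i, Complex.normSq (φ p i)) * (∑ i, Complex.normSq (φ p i)) = 1 := by
      have := h
      norm_num at this
      exact_mod_cast this
    have h3 : (0:ℝ) ≤ ∑ i, Complex.normSq (φ p i) :=
      Finset.sum_nonneg fun i _ => Complex.normSq_nonneg _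
    have h4 : (∑ i, Complex.normSq (φ p i)) = 1 := by nlinarith
    rw [h4]; norm_num
  -- C and R
  set C : Fin d × Fin d × Fin d × Fin d → ℂ := fun σ =>
    ∑ p : Fin (d+1) × Fin d, φ p σ.1 * (starRingEnd ℂ) (φ p σ.2.1) *
      (φ p σ.2.2.1 * (starRingEnd ℂ) (φ p σ.2.2.2)) with hC
  set R : Fin d × Fin d × Fin d × Fin d → ℂ := fun σ =>
    (if σ.1 = σ.2.1 then 1 else 0) * (if σ.2.2.1 = σ.2.2.2 then 1 else 0)
      + (if σ.1 = σ.2.2.2 then 1 else 0) * (if σ.2.2.1 = σ.2.1 then 1 else 0) with hR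
  suffices hsuff : C (i, j, l, m) = R (i, j, l, m) by
    simpa only [hC, hR] using hsuff
  have hRconj : ∀ σ, (starRingEnd ℂ) (R σ) = R σ := fun σ => by
    simp only [hR, _root_.map_add, _root_.map_mul, apply_ite (starRingEnd ℂ),
      _root_.map_one, _root_.map_zero]
  have hCconj : ∀ σ, (starRingEnd ℂ) (C σ) = ∑ q : Fin (d+1) × Fin d,
      (starRingEnd ℂ) (φ q σ.1) * φ q σ.2.1 *
        ((starRingEnd ℂ) (φ q σ.2.2.1) * φ q σ.2.2.2) := fun σ => by
    simp only [hC, _root_.map_sum, _root_.map_mul, Complex.conj_conj]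
  -- Z1
  have hZ1 : ∑ σ : Fin d × Fin d × Fin d × Fin d, C σ * (starRingEnd ℂ) (C σ)
      = 2*(d:ℂ)^2 + 2*(d:ℂ) := by
    have e1 : ∀ σ : Fin d × Fin d × Fin d × Fin d, C σ * (starRingEnd ℂ) (C σ)
        = ∑ pq : (Fin (d+1) × Fin d) × (Fin (d+1) × Fin d),
            (φ pq.1 σ.1 * (starRingEnd ℂ) (φ pq.2 σ.1)) *
              ((starRingEnd ℂ) (φ pq.1 σ.2.1) * φ pq.2 σ.2.1) *
              ((φ pq.1 σ.2.2.1 * (starRingEnd ℂ) (φ pq.2 σ.2.2.1)) *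
                ((starRingEnd ℂ) (φ pq.1 σ.2.2.2) * φ pq.2 σ.2.2.2)) := by
      intro σ
      rw [hCconj, hC]
      rw [← mubAux_sum_two (fun p => φ p σ.1 * (starRingEnd ℂ) (φ p σ.2.1) *
            (φ p σ.2.2.1 * (starRingEnd ℂ) (φ p σ.2.2.2)))
          (fun q => (starRingEnd ℂ) (φ q σ.1) * φ q σ.2.1 *
            ((starRingEnd ℂ) (φ q σ.2.2.1) * φ q σ.2.2.2))]
      exact Finset.sum_congr rfl fun pq _ => by ring
    rw [Finset.sum_congr rfl fun σ _ => e1 σ, Finset.sum_comm]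
    have e2 : ∀ pq : (Fin (d+1) × Fin d) × (Fin (d+1) × Fin d),
        (∑ σ : Fin d × Fin d × Fin d × Fin d,
          (φ pq.1 σ.1 * (starRingEnd ℂ) (φ pq.2 σ.1)) *
            ((starRingEnd ℂ) (φ pq.1 σ.2.1) * φ pq.2 σ.2.1) *
            ((φ pq.1 σ.2.2.1 * (starRingEnd ℂ) (φ pq.2 σ.2.2.1)) *
              ((starRingEnd ℂ) (φ pq.1 σ.2.2.2) * φ pq.2 σ.2.2.2)))
        = ((if pq.1.2 = pq.2.2 then (1:ℂ) else 0) * (if pq.1.1 = pq.2.1 then 1 else 0)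
            + (1/(d:ℂ)) * (1 - if pq.1.1 = pq.2.1 then 1 else 0))^2 := by
      intro pq
      refine Eq.trans (mubAux_sum_four (fun x => φ pq.1 x * (starRingEnd ℂ) (φ pq.2 x))
        (fun x => (starRingEnd ℂ) (φ pq.1 x) * φ pq.2 x)
        (fun x => φ pq.1 x * (starRingEnd ℂ) (φ pq.2 x))
        (fun x => (starRingEnd ℂ) (φ pq.1 x) * φ pq.2 x)) ?_
      have hb : (∑ x, (starRingEnd ℂ) (φ pq.1 x) * φ pq.2 x)
          = (starRingEnd ℂ) (∑ x, φ pq.1 x * (starRingEnd ℂ) (φ pq.2 x)) := by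
        rw [_root_.map_sum]
        exact Finset.sum_congr rfl fun x _ => by
          rw [_root_.map_mul, Complex.conj_conj]
      rw [hb, ha pq.1 pq.2]
      ring
    rw [Finset.sum_congr rfl fun pq _ => e2 pq]
    rw [Fintype.sum_prod_type]
    exact mubAux_E_sum d hd
  -- Z2
  have hZ2 : ∑ σ : Fin d × Fin d × Fin d × Fin d, C σ * (starRingEnd ℂ) (R σ)
      = 2*(d:ℂ)^2 + 2*(d:ℂ) := by
    have e1 : ∀ σ : Fin d × Fin d × Fin d × Fin d, C σ * (starRingEnd ℂ) (R σ)
        = ∑ p : Fin (d+1) × Fin d, φ p σ.1 * (starRingEnd ℂ) (φ p σ.2.1) *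
            (φ p σ.2.2.1 * (starRingEnd ℂ) (φ p σ.2.2.2)) * R σ := by
      intro σ
      rw [hRconj, hC, Finset.sum_mul]
    rw [Finset.sum_congr rfl fun σ _ => e1 σ, Finset.sum_comm]
    rw [Finset.sum_congr rfl fun p _ => mubAux_collapse2 d (φ p) (hnorm p)]
    simp [Finset.card_univ]
    ring
  -- Z3
  have hZ3 : ∑ σ : Fin d × Fin d × Fin d × Fin d, R σ * (starRingEnd ℂ) (C σ)
      = 2*(d:ℂ)^2 + 2*(d:ℂ) := by
    have e1 : ∀ σ : Fin d × Fin d × Fin d × Fin d, R σ * (starRingEnd ℂ) (C σ)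
        = ∑ q : Fin (d+1) × Fin d, (starRingEnd ℂ) (φ q σ.1) * φ q σ.2.1 *
            ((starRingEnd ℂ) (φ q σ.2.2.1) * φ q σ.2.2.2) * R σ := by
      intro σ
      rw [hCconj, mul_comm, Finset.sum_mul]
    rw [Finset.sum_congr rfl fun σ _ => e1 σ, Finset.sum_comm]
    rw [Finset.sum_congr rfl fun q _ => mubAux_collapse2' d (φ q) (hnorm q)]
    simp [Finset.card_univ]
    ring
  -- Z4
  have hZ4 : ∑ σ : Fin d × Fin d × Fin d × Fin d, R σ * (starRingEnd ℂ) (R σ)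
      = 2*(d:ℂ)^2 + 2*(d:ℂ) := by
    simp only [hRconj, hR]
    simp [Fintype.sum_prod_type, ite_mul, mul_ite, Finset.sum_ite_eq, Finset.sum_ite_eq',
      Finset.sum_ite_irrel, Finset.sum_const, Finset.card_univ, add_mul, mul_add,
      Finset.sum_add_distrib, apply_ite (starRingEnd ℂ), map_one, map_zero]
    ring
  -- total zero
  have hZ : ∑ σ : Fin d × Fin d × Fin d × Fin d,
      (C σ - R σ) * (starRingEnd ℂ) (C σ - R σ) = 0 := by
    have e : ∀ σ : Fin d × Fin d × Fin d × Fin d,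
        (C σ - R σ) * (starRingEnd ℂ) (C σ - R σ)
        = C σ * (starRingEnd ℂ) (C σ) - C σ * (starRingEnd ℂ) (R σ)
          - R σ * (starRingEnd ℂ) (C σ) + R σ * (starRingEnd ℂ) (R σ) := fun σ => by
      rw [_root_.map_sub]; ring
    rw [Finset.sum_congr rfl fun σ _ => e σ]
    rw [Finset.sum_add_distrib, Finset.sum_sub_distrib, Finset.sum_sub_distrib,
      hZ1, hZ2, hZ3, hZ4]
    ring
  have hsum0 : ∑ σ : Fin d × Fin d × Fin d × Fin d, Complex.normSq (C σ - R σ) = 0 := by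
    have e2 : ((∑ σ : Fin d × Fin d × Fin d × Fin d, Complex.normSq (C σ - R σ) : ℝ) : ℂ)
        = ∑ σ : Fin d × Fin d × Fin d × Fin d,
            (C σ - R σ) * (starRingEnd ℂ) (C σ - R σ) := by
      push_cast
      exact Finset.sum_congr rfl fun σ _ => (Complex.mul_conj _).symm
    rw [hZ] at e2
    exact_mod_cast e2
  have hzero := (Finset.sum_eq_zero_iff_of_nonneg
    (fun σ _ => Complex.normSq_nonneg (C σ - R σ))).mp hsum0 (i, j, l, m) (Finset.mem_univ _)
  have := Complex.normSq_eq_zero.mp hzero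
  exact sub_eq_zero.mp this

/-- Wootters' probability-table transition formula: for `d+1` mutually unbiased bases
with projectors `P(n,k)` and probability tables `μ(n,k) = Tr(ρ P(n,k))`,
`μ'(n,k) = Tr(ρ' P(n,k))`, the transition probability satisfies
`Tr(ρ ρ') = ∑_{n,k} μ(n,k) μ'(n,k) − 1`. -/
theorem mub_transition_probability (d : ℕ) (hd : 1 ≤ d)
    (ψ : Fin (d + 1) → Fin d → (Fin d → ℂ))
    (hmub : ∀ n n' k k', (‖∑ i, star (ψ n' k' i) * ψ n k i‖) ^ 2 =
      (if k = k' then 1 else 0) * (if n = n' then 1 else 0) +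
        (1 / (d : ℝ)) * (1 - (if n = n' then 1 else 0)))
    (P : Fin (d + 1) → Fin d → Matrix (Fin d) (Fin d) ℂ)
    (hP : ∀ n k, P n k = vecMulVec (ψ n k) (star (ψ n k)))
    (ρ ρ' : Matrix (Fin d) (Fin d) ℂ) (hρ : IsDensity ρ) (hρ' : IsDensity ρ') :
    (ρ * ρ').trace =
      (∑ n, ∑ k, (ρ * P n k).trace * (ρ' * P n k).trace) - 1 := by

  classical
  obtain ⟨-, hρtr⟩ := hρ
  obtain ⟨-, hρ'tr⟩ := hρ'
  have key := mub_key d hd ψ hmub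
  have htr : ∀ (A : Matrix (Fin d) (Fin d) ℂ) (n : Fin (d+1)) (k : Fin d), (A * P n k).trace
      = ∑ q : Fin d × Fin d, A q.1 q.2 * (ψ n k q.2 * (starRingEnd ℂ) (ψ n k q.1)) := by
    intro A n k
    rw [hP]
    simp only [Matrix.trace, Matrix.diag_apply, Matrix.mul_apply, Matrix.vecMulVec_apply,
      Fintype.sum_prod_type, Pi.star_apply]
    exact Finset.sum_congr rfl fun x _ => Finset.sum_congr rfl fun y _ => rfl
  have hmain : ∑ n, ∑ k, (ρ * P n k).trace * (ρ' * P n k).trace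
      = (ρ * ρ').trace + 1 := by
    rw [← Fintype.sum_prod_type
      (f := fun p : Fin (d+1) × Fin d => (ρ * P p.1 p.2).trace * (ρ' * P p.1 p.2).trace)]
    have e1 : ∀ p : Fin (d+1) × Fin d, (ρ * P p.1 p.2).trace * (ρ' * P p.1 p.2).trace
        = ∑ qq : (Fin d × Fin d) × (Fin d × Fin d),
            (ρ qq.1.1 qq.1.2 * ρ' qq.2.1 qq.2.2) *
              (ψ p.1 p.2 qq.1.2 * (starRingEnd ℂ) (ψ p.1 p.2 qq.1.1) *
                (ψ p.1 p.2 qq.2.2 * (starRingEnd ℂ) (ψ p.1 p.2 qq.2.1))) := by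
      intro p
      rw [htr ρ p.1 p.2, htr ρ' p.1 p.2,
        ← mubAux_sum_two
          (fun q : Fin d × Fin d => ρ q.1 q.2 * (ψ p.1 p.2 q.2 * (starRingEnd ℂ) (ψ p.1 p.2 q.1)))
          (fun q : Fin d × Fin d => ρ' q.1 q.2 * (ψ p.1 p.2 q.2 * (starRingEnd ℂ) (ψ p.1 p.2 q.1)))]
      exact Finset.sum_congr rfl fun qq _ => by ring
    rw [Finset.sum_congr rfl fun p _ => e1 p, Finset.sum_comm]
    have e2 : ∀ qq : (Fin d × Fin d) × (Fin d × Fin d),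
        (∑ p : Fin (d+1) × Fin d, (ρ qq.1.1 qq.1.2 * ρ' qq.2.1 qq.2.2) *
          (ψ p.1 p.2 qq.1.2 * (starRingEnd ℂ) (ψ p.1 p.2 qq.1.1) *
            (ψ p.1 p.2 qq.2.2 * (starRingEnd ℂ) (ψ p.1 p.2 qq.2.1))))
        = (ρ qq.1.1 qq.1.2 * ρ' qq.2.1 qq.2.2) *
            ((if qq.1.2 = qq.1.1 then 1 else 0) * (if qq.2.2 = qq.2.1 then 1 else 0)
              + (if qq.1.2 = qq.2.1 then 1 else 0) * (if qq.2.2 = qq.1.1 then 1 else 0)) := by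
      intro qq
      rw [← Finset.mul_sum, key qq.1.2 qq.1.1 qq.2.2 qq.2.1]
    rw [Finset.sum_congr rfl fun qq _ => e2 qq]
    simp only [Fintype.sum_prod_type, mul_add, mul_ite, mul_one, mul_zero, ite_mul, zero_mul,
      one_mul, Finset.sum_add_distrib, Finset.sum_ite_irrel, Finset.sum_ite_eq,
      Finset.sum_ite_eq', Finset.mem_univ, if_true, Finset.sum_const_zero, add_zero, zero_add]
    have t1 : ∑ x : Fin d, ∑ y : Fin d, ρ x x * ρ' y y = 1 := by
      rw [← Finset.sum_mul_sum]
      have h1 : ∑ x : Fin d, ρ x x = 1 := hρtr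
      have h2 : ∑ y : Fin d, ρ' y y = 1 := hρ'tr
      rw [h1, h2, one_mul]
    have t2 : ∑ x : Fin d, ∑ y : Fin d, ρ x y * ρ' y x = (ρ * ρ').trace := by
      simp [Matrix.trace, Matrix.diag, Matrix.mul_apply]
    rw [t1, t2]
    ring
  rw [hmain]; ring
end
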